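/- arXiv:2110.03406 — 4 statements merged into one kernel-verified Lean document; each statement's English description precedes it below -/
import Mathlib

section
/- Let f : [0,T] → ℝ be continuous and let g : [0,T] → ℝ be càdlàg and of bounded variation on [0,T]. Then sup_{t∈[0,T]} | (1/ε) ∫₀^t ( g((s+ε)∧t) − g(s) ) ( f((s+ε)∧t) − f(s) ) ds | → 0 as ε ↓ 0. In other words, the pathwise quadratic covariation [g,f], defined as the uniform limit as ε ↓ 0 of t ↦ (1/ε)∫₀^t (g((s+ε)∧t) − g(s))(f((s+ε)∧t) − f(s)) ds, exists and is identically 0. (This is the deterministic content of the claim that an adapted process with finite variation is orthogonal to every continuous local martingale.) -/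
noncomputable section
open Filter Topology

/-- A function `x : ℝ → E`, viewed as a path on `[0,T]`, is càdlàg on `[0,T]`:
right-continuous at every `t ∈ [0,T)` and with a left limit at every `t ∈ (0,T]`. -/
def IsCadlagOn {E : Type*} [TopologicalSpace E] (T : ℝ) (x : ℝ → E) : Prop :=
  (∀ t ∈ Set.Ico (0 : ℝ) T, ContinuousWithinAt x (Set.Ici t) t) ∧
  ∀ t ∈ Set.Ioc (0 : ℝ) T, ∃ L, Tendsto x (𝓝[<] t) (𝓝 L)

/-- If `f` is continuous on `[0,T]` and `g` is càdlàg with bounded variation on `[0,T]`, then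
the regularized quadratic covariation `[g,f]` exists and vanishes identically:
`sup_{t∈[0,T]} |(1/ε) ∫₀^t (g((s+ε)∧t) - g(s)) (f((s+ε)∧t) - f(s)) ds| → 0` as `ε ↓ 0`. -/
theorem stmt4 (T : ℝ) (hT : 0 < T) (f g : ℝ → ℝ)
    (hf : ContinuousOn f (Set.Icc (0 : ℝ) T))
    (hg : IsCadlagOn T g)
    (hgbv : BoundedVariationOn g (Set.Icc (0 : ℝ) T)) :
    Tendsto
      (fun ε : ℝ => ⨆ t : Set.Icc (0 : ℝ) T,
        |(1 / ε) * ∫ s in (0 : ℝ)..(t.1 : ℝ),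
            (g (min (s + ε) t.1) - g s) * (f (min (s + ε) t.1) - f s)|)
      (𝓝[>] 0) (𝓝 0) := by
  classical
  set S : Set ℝ := Set.Icc (0 : ℝ) T with hS
  have h0S : (0 : ℝ) ∈ S := ⟨le_rfl, hT.le⟩
  have hTS : T ∈ S := ⟨hT.le, le_rfl⟩
  have hlbv : LocallyBoundedVariationOn g S := hgbv.locallyBoundedVariationOn
  -- the variation function
  set V : ℝ → ℝ := fun r => variationOnFromTo g S 0 r with hV
  have hVmono : MonotoneOn V S := variationOnFromTo.monotoneOn hlbv h0S
  have hV0 : V 0 = 0 := variationOnFromTo.self g S 0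
  have hVnonneg : ∀ r, 0 ≤ r → 0 ≤ V r := fun r hr =>
    variationOnFromTo.nonneg_of_le g S hr
  -- increments of V dominate increments of g
  have hginc : ∀ a b : ℝ, a ∈ S → b ∈ S → a ≤ b → |g b - g a| ≤ V b - V a := by
    intro a b ha hb hab
    have hadd := variationOnFromTo.add hlbv h0S ha hb
    have h1 : V b - V a = variationOnFromTo g S a b := by
      rw [hV]; dsimp only; linarith [hadd]
    rw [h1, variationOnFromTo.eq_of_le g S hab]
    have hsub : BoundedVariationOn g (S ∩ Set.Icc a b) :=
      hgbv.mono Set.inter_subset_left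
    have := hsub.dist_le (x := b) (y := a) ⟨hb, hab, le_rfl⟩ ⟨ha, le_rfl, hab⟩
    rwa [Real.dist_eq] at this
  -- the clamped variation function
  set W : ℝ → ℝ := fun s => V (min (max s 0) T) with hW
  have hclampS : ∀ s : ℝ, min (max s 0) T ∈ S := fun s =>
    ⟨le_min (le_max_right _ _) hT.le, min_le_right _ _⟩
  have hWmono : Monotone W := by
    intro a b hab
    exact hVmono (hclampS a) (hclampS b)
      (min_le_min (max_le_max hab le_rfl) le_rfl)
  have hWeq : ∀ s ∈ S, W s = V s := by
    intro s hs
    rw [hW]; dsimp only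
    rw [max_eq_left hs.1, min_eq_left hs.2]
  have hWconst : ∀ s, T ≤ s → W s = V T := by
    intro s hs
    rw [hW]; dsimp only
    rw [min_eq_right (le_max_of_le_left hs)]
  have hWnonneg : ∀ s, 0 ≤ W s := fun s =>
    hVnonneg _ (le_min (le_max_right _ _) hT.le)
  have hWle : ∀ s, W s ≤ V T := fun s => hVmono (hclampS s) hTS (min_le_right _ _)
  have hWint : ∀ a b : ℝ, IntervalIntegrable W MeasureTheory.volume a b := fun a b =>
    hWmono.intervalIntegrable
  have hVT : 0 ≤ V T := hVnonneg T hT.le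
  -- the key integral estimate
  have hkey : ∀ ε : ℝ, 0 < ε →
      (∫ s in (0 : ℝ)..T, (W (s + ε) - W s)) ≤ ε * V T := by
    intro ε hε
    have hWε : ∀ a b : ℝ, IntervalIntegrable (fun s => W (s + ε))
        MeasureTheory.volume a b := fun a b =>
      (hWmono.comp (fun x y hxy => (add_le_add_left hxy ε : x + ε ≤ y + ε))).intervalIntegrable
    rw [intervalIntegral.integral_sub (hWε 0 T) (hWint 0 T)]
    have hshift : (∫ s in (0 : ℝ)..T, W (s + ε)) = ∫ s in ε..(T + ε), W s := by
      rw [intervalIntegral.integral_comp_add_right, zero_add]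
    have hsplit1 : (∫ s in (0 : ℝ)..ε, W s) + (∫ s in ε..(T + ε), W s)
        = ∫ s in (0 : ℝ)..(T + ε), W s :=
      intervalIntegral.integral_add_adjacent_intervals (hWint 0 ε) (hWint ε (T + ε))
    have hsplit2 : (∫ s in (0 : ℝ)..T, W s) + (∫ s in T..(T + ε), W s)
        = ∫ s in (0 : ℝ)..(T + ε), W s :=
      intervalIntegral.integral_add_adjacent_intervals (hWint 0 T) (hWint T (T + ε))
    have htail : (∫ s in T..(T + ε), W s) = ε * V T := by
      have : (∫ s in T..(T + ε), W s) = ∫ s in T..(T + ε), V T := by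
        apply intervalIntegral.integral_congr
        intro s hs
        have hs' : T ≤ s := by
          rcases hs with ⟨h1, h2⟩
          rw [min_eq_left (by linarith : T ≤ T + ε)] at h1
          exact h1
        exact hWconst s hs'
      rw [this, intervalIntegral.integral_const, smul_eq_mul, add_sub_cancel_left]
    have hhead : 0 ≤ ∫ s in (0 : ℝ)..ε, W s :=
      intervalIntegral.integral_nonneg hε.le fun u _ => hWnonneg u
    linarith [hshift, hsplit1, hsplit2, htail, hhead]
  -- uniform continuity of f
  rw [Metric.tendsto_nhdsWithin_nhds]
  intro η hη
  set δ : ℝ := η / (2 * (V T + 1)) with hδdef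
  have hδ : 0 < δ := div_pos hη (by positivity)
  have hUC := (isCompact_Icc.uniformContinuousOn_of_continuous hf)
  rw [Metric.uniformContinuousOn_iff] at hUC
  obtain ⟨ε₀, hε₀, hUC⟩ := hUC δ hδ
  refine ⟨ε₀, hε₀, ?_⟩
  intro ε hεmem hεdist
  have hε : 0 < ε := hεmem
  have hεlt : ε < ε₀ := by
    rw [Real.dist_eq, sub_zero, abs_of_pos hε] at hεdist
    exact hεdist
  -- per-t bound
  have hub : ∀ t : S,
      |(1 / ε) * ∫ s in (0 : ℝ)..(t.1 : ℝ),
          (g (min (s + ε) t.1) - g s) * (f (min (s + ε) t.1) - f s)| ≤ δ * V T := by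
    intro ⟨t, ht0, htT⟩
    dsimp only
    have hptwise : ∀ s ∈ Set.uIoc (0 : ℝ) t,
        ‖(g (min (s + ε) t) - g s) * (f (min (s + ε) t) - f s)‖
          ≤ δ * (W (s + ε) - W s) := by
      intro s hs
      rw [Set.uIoc_of_le ht0] at hs
      obtain ⟨hs0, hst⟩ := hs
      set m : ℝ := min (s + ε) t with hm
      have hsm : s ≤ m := le_min (by linarith) hst
      have hmt : m ≤ t := min_le_right _ _
      have hsS : s ∈ S := ⟨hs0.le, hst.trans htT⟩
      have hmS : m ∈ S := ⟨hs0.le.trans hsm, hmt.trans htT⟩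
      have hg1 : |g m - g s| ≤ W (s + ε) - W s := by
        have h1 : |g m - g s| ≤ V m - V s := hginc s m hsS hmS hsm
        have h2 : W m ≤ W (s + ε) := hWmono (min_le_left _ _)
        rw [← hWeq m hmS, ← hWeq s hsS] at h1
        linarith
      have hf1 : |f m - f s| ≤ δ := by
        have := hUC m hmS s hsS (by
          rw [Real.dist_eq, abs_of_nonneg (by linarith : (0:ℝ) ≤ m - s)]
          have : m ≤ s + ε := min_le_left _ _
          linarith)
        rw [Real.dist_eq] at this
        exact this.le
      have hWdiff : 0 ≤ W (s + ε) - W s := by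
        have := hWmono (by linarith : s ≤ s + ε)
        linarith
      calc ‖(g m - g s) * (f m - f s)‖ = |g m - g s| * |f m - f s| := abs_mul _ _
        _ ≤ (W (s + ε) - W s) * δ :=
            mul_le_mul hg1 hf1 (abs_nonneg _) hWdiff
        _ = δ * (W (s + ε) - W s) := mul_comm _ _
    have hbint : IntervalIntegrable (fun s => δ * (W (s + ε) - W s))
        MeasureTheory.volume 0 t := by
      apply IntervalIntegrable.const_mul
      exact ((hWmono.comp (fun x y hxy => (add_le_add_left hxy ε : x + ε ≤ y + ε))).intervalIntegrable).sub
        (hWint 0 t)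
    have habs : ‖∫ s in (0 : ℝ)..t, (g (min (s + ε) t) - g s) * (f (min (s + ε) t) - f s)‖
        ≤ |∫ s in (0 : ℝ)..t, δ * (W (s + ε) - W s)| :=
      intervalIntegral.norm_integral_le_abs_of_norm_le
        ((MeasureTheory.ae_restrict_iff' measurableSet_uIoc).mpr
          (MeasureTheory.ae_of_all _ hptwise)) hbint
    have hInonneg : 0 ≤ ∫ s in (0 : ℝ)..t, δ * (W (s + ε) - W s) := by
      apply intervalIntegral.integral_nonneg ht0
      intro u _
      have h1 := hWmono (le_add_of_nonneg_right hε.le : u ≤ u + ε)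
      exact mul_nonneg hδ.le (by linarith)
    have hmono : (∫ s in (0 : ℝ)..t, δ * (W (s + ε) - W s))
        ≤ ∫ s in (0 : ℝ)..T, δ * (W (s + ε) - W s) := by
      apply intervalIntegral.integral_mono_interval le_rfl ht0 htT
      · apply MeasureTheory.ae_of_all
        intro u
        have h1 := hWmono (le_add_of_nonneg_right hε.le : u ≤ u + ε)
        show (0:ℝ) ≤ δ * (W (u + ε) - W u)
        exact mul_nonneg hδ.le (by linarith)
      · apply IntervalIntegrable.const_mul
        exact ((hWmono.comp (fun x y hxy => (add_le_add_left hxy ε : x + ε ≤ y + ε))).intervalIntegrable).sub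
          (hWint 0 T)
    have hfinal : (∫ s in (0 : ℝ)..T, δ * (W (s + ε) - W s)) ≤ δ * (ε * V T) := by
      rw [intervalIntegral.integral_const_mul]
      exact mul_le_mul_of_nonneg_left (hkey ε hε) hδ.le
    rw [abs_mul, abs_of_pos (by positivity : (0:ℝ) < 1 / ε)]
    rw [Real.norm_eq_abs] at habs
    rw [abs_of_nonneg hInonneg] at habs
    calc (1 / ε) * |∫ s in (0 : ℝ)..t, (g (min (s + ε) t) - g s) * (f (min (s + ε) t) - f s)|
        ≤ (1 / ε) * (δ * (ε * V T)) := by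
          apply mul_le_mul_of_nonneg_left _ (by positivity)
          linarith [habs, hmono, hfinal]
      _ = δ * V T := by field_simp
  -- conclude
  haveI : Nonempty S := ⟨⟨0, h0S⟩⟩
  have hbdd : BddAbove (Set.range fun t : S =>
      |(1 / ε) * ∫ s in (0 : ℝ)..(t.1 : ℝ),
          (g (min (s + ε) t.1) - g s) * (f (min (s + ε) t.1) - f s)|) := by
    refine ⟨δ * V T, ?_⟩
    rintro x ⟨t, rfl⟩
    exact hub t
  have hsup_le : (⨆ t : S,
      |(1 / ε) * ∫ s in (0 : ℝ)..(t.1 : ℝ),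
          (g (min (s + ε) t.1) - g s) * (f (min (s + ε) t.1) - f s)|) ≤ δ * V T :=
    ciSup_le hub
  have hsup_nonneg : 0 ≤ ⨆ t : S,
      |(1 / ε) * ∫ s in (0 : ℝ)..(t.1 : ℝ),
          (g (min (s + ε) t.1) - g s) * (f (min (s + ε) t.1) - f s)| :=
    le_trans (abs_nonneg _) (le_ciSup hbdd ⟨0, h0S⟩)
  rw [Real.dist_eq, sub_zero, abs_of_nonneg hsup_nonneg]
  have hδVT : δ * (2 * (V T + 1)) = η := by
    rw [hδdef]; field_simp
  nlinarith [hsup_le, hδ, hVT]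
end
end

section
/- Let F : Θ → ℝ be non-anticipative, x ∈ D([0,T]) and n : [0,T] → ℝ continuous; write s⊕ε := (s+ε)∧T for s ∈ [0,T], ε > 0. Assume there exist a function φ : ℝ₊ → ℝ₊ with sup_{0≤y≤K} φ(y) < ∞ for every K > 0, and a non-decreasing function b : [0,T] → ℝ, such that |F(s⊕ε, x) − F(s⊕ε, x_{s∧} ⊞_{s⊕ε} x(s⊕ε))| ≤ ∫_{(s, s⊕ε)} φ(|x(u−) − x(s)|) db(u) for all s ∈ [0,T] and ε > 0, where the integral is the Lebesgue–Stieltjes integral with respect to b. Then sup_{t∈[0,T]} | (1/ε) ∫₀^t ( F(s⊕ε, x) − F(s⊕ε, x_{s∧} ⊞_{s⊕ε} x(s⊕ε)) ) ( n(s⊕ε) − n(s) ) ds | → 0 as ε ↓ 0. (This is the pathwise content of Remark 3.2: such a bound implies that the pair (F, X) satisfies Assumption (A), i.e. the displayed expression converges to 0 u.c.p. when x is replaced by a càdlàg process X and n by any continuous martingale N.) -/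
noncomputable section
open Filter Topology MeasureTheory

/-- The stopped path `x_{t∧}`. -/
def stopAt {E : Type*} (x : ℝ → E) (t : ℝ) : ℝ → E := fun s => if s < t then x s else x t

/-- The path `x ⊞_t y`, equal to `x` on `[0,t)` and to the constant `y` on `[t,T]`. -/
def bplus {E : Type*} (x : ℝ → E) (t : ℝ) (y : E) : ℝ → E :=
  fun s => if s < t then x s else y

/-- A functional on `Θ` is non-anticipative if `F(t,x) = F(t, x_{t∧})`. -/
def NonAnticipative {E α : Type*} (T : ℝ) (F : ℝ → (ℝ → E) → α) : Prop :=
  ∀ t ∈ Set.Icc (0 : ℝ) T, ∀ x, F t x = F t (stopAt x t)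

/-- A càdlàg path is bounded on `[0,T]`, together with its left limits. -/
theorem cadlag_bdd {E : Type*} [NormedAddCommGroup E] {T : ℝ} (hT : 0 < T)
    {x : ℝ → E} (hx : IsCadlagOn T x) :
    ∃ C : ℝ, 0 ≤ C ∧ (∀ u ∈ Set.Icc (0:ℝ) T, ‖x u‖ ≤ C) ∧
      (∀ u ∈ Set.Ioc (0:ℝ) T, ‖Function.leftLim x u‖ ≤ C) := by
  have key : ∃ C : ℝ, ∀ u ∈ Set.Icc (0:ℝ) T, ‖x u‖ ≤ C := by
    have hcomp : IsCompact (Set.Icc (0:ℝ) T) := isCompact_Icc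
    refine hcomp.induction_on (p := fun A => ∃ C : ℝ, ∀ u ∈ A, ‖x u‖ ≤ C)
      ⟨0, by simp⟩ ?_ ?_ ?_
    · rintro A B hAB ⟨C, hC⟩
      exact ⟨C, fun u hu => hC u (hAB hu)⟩
    · rintro A B ⟨C₁, hC₁⟩ ⟨C₂, hC₂⟩
      exact ⟨max C₁ C₂, by
        rintro u (hu | hu)
        · exact (hC₁ u hu).trans (le_max_left _ _)
        · exact (hC₂ u hu).trans (le_max_right _ _)⟩
    · intro t₀ ht₀
      -- eventual bound on the right part
      have evR : ∃ C₁ : ℝ, ∀ᶠ u in 𝓝[Set.Icc 0 T ∩ Set.Ici t₀] t₀, ‖x u‖ ≤ C₁ := by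
        by_cases hlt : t₀ < T
        · refine ⟨‖x t₀‖ + 1, ?_⟩
          have hc : Tendsto x (𝓝[Set.Ici t₀] t₀) (𝓝 (x t₀)) := hx.1 t₀ ⟨ht₀.1, hlt⟩
          have h1 : ∀ᶠ u in 𝓝[Set.Ici t₀] t₀, x u ∈ Metric.ball (x t₀) 1 :=
            hc (Metric.ball_mem_nhds _ one_pos)
          have h2 : ∀ᶠ u in 𝓝[Set.Icc 0 T ∩ Set.Ici t₀] t₀, x u ∈ Metric.ball (x t₀) 1 :=
            h1.filter_mono (nhdsWithin_mono t₀ Set.inter_subset_right)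
          filter_upwards [h2] with u hu
          have : ‖x u - x t₀‖ < 1 := by
            rw [← dist_eq_norm]; exact hu
          calc ‖x u‖ = ‖x u - x t₀ + x t₀‖ := by rw [sub_add_cancel]
            _ ≤ ‖x u - x t₀‖ + ‖x t₀‖ := norm_add_le _ _
            _ ≤ ‖x t₀‖ + 1 := by linarith
        · refine ⟨‖x t₀‖, ?_⟩
          have ht₀T : t₀ = T := le_antisymm ht₀.2 (not_lt.1 hlt)
          filter_upwards [self_mem_nhdsWithin] with u hu
          have : u = t₀ := le_antisymm (ht₀T ▸ hu.1.2) hu.2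
          rw [this]
      -- eventual bound on the left part
      have evL : ∃ C₂ : ℝ, ∀ᶠ u in 𝓝[Set.Icc 0 T ∩ Set.Iio t₀] t₀, ‖x u‖ ≤ C₂ := by
        by_cases h0 : 0 < t₀
        · obtain ⟨L, hL⟩ := hx.2 t₀ ⟨h0, ht₀.2⟩
          refine ⟨‖L‖ + 1, ?_⟩
          have h1 : ∀ᶠ u in 𝓝[<] t₀, x u ∈ Metric.ball L 1 :=
            hL (Metric.ball_mem_nhds _ one_pos)
          have h2 : ∀ᶠ u in 𝓝[Set.Icc 0 T ∩ Set.Iio t₀] t₀, x u ∈ Metric.ball L 1 :=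
            h1.filter_mono (nhdsWithin_mono t₀ Set.inter_subset_right)
          filter_upwards [h2] with u hu
          have : ‖x u - L‖ < 1 := by rw [← dist_eq_norm]; exact hu
          calc ‖x u‖ = ‖x u - L + L‖ := by rw [sub_add_cancel]
            _ ≤ ‖x u - L‖ + ‖L‖ := norm_add_le _ _
            _ ≤ ‖L‖ + 1 := by linarith
        · refine ⟨0, ?_⟩
          filter_upwards [self_mem_nhdsWithin] with u hu
          exact absurd (hu.2.trans_le (not_lt.1 h0)) (not_lt.2 hu.1.1)
      obtain ⟨C₁, hC₁⟩ := evR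
      obtain ⟨C₂, hC₂⟩ := evL
      have hsplit : Set.Icc (0:ℝ) T =
          (Set.Icc 0 T ∩ Set.Iio t₀) ∪ (Set.Icc 0 T ∩ Set.Ici t₀) := by
        rw [← Set.inter_union_distrib_left, Set.Iio_union_Ici, Set.inter_univ]
      have hev : ∀ᶠ u in 𝓝[Set.Icc (0:ℝ) T] t₀, ‖x u‖ ≤ max C₁ C₂ := by
        rw [hsplit, nhdsWithin_union, eventually_sup]
        constructor
        · filter_upwards [hC₂] with u hu; exact hu.trans (le_max_right _ _)
        · filter_upwards [hC₁] with u hu; exact hu.trans (le_max_left _ _)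
      exact ⟨{u | ‖x u‖ ≤ max C₁ C₂}, hev, max C₁ C₂, fun u hu => hu⟩
  obtain ⟨C₀, hC₀⟩ := key
  refine ⟨max C₀ 0, le_max_right _ _, fun u hu => (hC₀ u hu).trans (le_max_left _ _), ?_⟩
  intro u hu
  obtain ⟨L, hL⟩ := hx.2 u hu
  have hne : 𝓝[<] u ≠ ⊥ := (nhdsLT_neBot u).ne
  have hLL : Function.leftLim x u = L := leftLim_eq_of_tendsto hL
  rw [hLL]
  have hev : ∀ᶠ s in 𝓝[<] u, ‖x s‖ ≤ max C₀ 0 := by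
    filter_upwards [Ioo_mem_nhdsLT_of_mem (⟨hu.1, le_refl u⟩ : u ∈ Set.Ioc 0 u)] with s hs
    exact (hC₀ s ⟨hs.1.le, hs.2.le.trans hu.2⟩).trans (le_max_left _ _)
  exact le_of_tendsto hL.norm hev

/-- The key shift estimate for a monotone function. -/
theorem monotone_shift_integral_le {g : ℝ → ℝ} (hg : Monotone g) {T : ℝ} (hT : 0 < T)
    {ε : ℝ} (hε : 0 < ε) :
    ∫ s in (0:ℝ)..T, (g (min (s + ε) T) - g s) ≤ ε * (g T - g 0) := by
  set h : ℝ → ℝ := fun u => g (min u T) with hh_def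
  have hh : Monotone h := hg.comp (monotone_id.min monotone_const)
  have hint : ∀ a b : ℝ, IntervalIntegrable h MeasureTheory.volume a b :=
    fun a b => (hh.monotoneOn _).intervalIntegrable
  have hgint : ∀ a b : ℝ, IntervalIntegrable g MeasureTheory.volume a b :=
    fun a b => (hg.monotoneOn _).intervalIntegrable
  have hsint : ∀ a b : ℝ, IntervalIntegrable (fun s => h (s + ε)) MeasureTheory.volume a b :=
    fun a b => ((hh.comp (monotone_id.add_const ε)).monotoneOn _).intervalIntegrable
  have e0 : ∫ s in (0:ℝ)..T, (g (min (s + ε) T) - g s)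
      = (∫ s in (0:ℝ)..T, h (s + ε)) - ∫ s in (0:ℝ)..T, g s := by
    rw [← intervalIntegral.integral_sub (hsint 0 T) (hgint 0 T)]
  have e1 : (∫ s in (0:ℝ)..T, h (s + ε)) = ∫ u in ε..(T + ε), h u := by
    rw [intervalIntegral.integral_comp_add_right h ε, zero_add]
  have e2 : (∫ s in (0:ℝ)..T, g s) = ∫ s in (0:ℝ)..T, h s := by
    apply intervalIntegral.integral_congr
    intro s hs
    rw [Set.uIcc_of_le hT.le] at hs
    simp only [hh_def, min_eq_left hs.2]
  have e3 : (∫ s in (0:ℝ)..ε, h s) + ∫ u in ε..(T + ε), h u = ∫ u in (0:ℝ)..(T + ε), h u :=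
    intervalIntegral.integral_add_adjacent_intervals (hint 0 ε) (hint ε (T + ε))
  have e4 : (∫ s in (0:ℝ)..T, h s) + ∫ u in T..(T + ε), h u = ∫ u in (0:ℝ)..(T + ε), h u :=
    intervalIntegral.integral_add_adjacent_intervals (hint 0 T) (hint T (T + ε))
  have e5 : (∫ u in T..(T + ε), h u) = ε * g T := by
    have : ∫ u in T..(T + ε), h u = ∫ _ in T..(T + ε), g T := by
      apply intervalIntegral.integral_congr
      intro u hu
      rw [Set.uIcc_of_le (by linarith : T ≤ T + ε)] at hu
      simp only [hh_def, min_eq_right hu.1]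
    rw [this, intervalIntegral.integral_const, smul_eq_mul, add_sub_cancel_left]
  have e6 : ε * g 0 ≤ ∫ s in (0:ℝ)..ε, h s := by
    have h1 : (∫ _ in (0:ℝ)..ε, g 0) ≤ ∫ s in (0:ℝ)..ε, h s := by
      apply intervalIntegral.integral_mono_on hε.le intervalIntegrable_const (hint 0 ε)
      intro s hs
      have : (0:ℝ) = min 0 T := (min_eq_left hT.le).symm
      calc g 0 = h 0 := by simp [hh_def, min_eq_left hT.le]
        _ ≤ h s := hh hs.1
    rwa [intervalIntegral.integral_const, smul_eq_mul, sub_zero] at h1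
  rw [e0, e1, e2]
  linarith

/-- Pathwise sufficient condition for Assumption (A): if the horizontal increments of `F` along
`x` are controlled by a Lebesgue–Stieltjes integral of `φ(|x(u-) - x(s)|)` with respect to a
non-decreasing `b`, where `φ ≥ 0` is bounded on compacts, then for any continuous `n`,
`sup_{t∈[0,T]} |(1/ε) ∫₀^t (F(s⊕ε, x) - F(s⊕ε, x_{s∧} ⊞_{s⊕ε} x(s⊕ε))) (n(s⊕ε) - n(s)) ds| → 0`
as `ε ↓ 0`, where `s⊕ε = (s+ε)∧T`. -/
theorem stmt8 (T : ℝ) (hT : 0 < T) (d : ℕ) (hd : 1 ≤ d)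
    (F : ℝ → (ℝ → EuclideanSpace ℝ (Fin d)) → ℝ) (hF : NonAnticipative T F)
    (x : ℝ → EuclideanSpace ℝ (Fin d)) (hx : IsCadlagOn T x)
    (n : ℝ → ℝ) (hn : ContinuousOn n (Set.Icc (0 : ℝ) T))
    (φ : ℝ → ℝ) (hφ0 : ∀ r, 0 ≤ φ r)
    (hφb : ∀ K > (0 : ℝ), BddAbove (φ '' Set.Icc (0 : ℝ) K))
    (b : ℝ → ℝ) (hb : Monotone b)
    (hbound : ∀ s ∈ Set.Icc (0 : ℝ) T, ∀ ε > (0 : ℝ),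
      |F (min (s + ε) T) x -
          F (min (s + ε) T) (bplus (stopAt x s) (min (s + ε) T) (x (min (s + ε) T)))| ≤
        ∫ u in Set.Ioo s (min (s + ε) T),
          φ ‖Function.leftLim x u - x s‖ ∂hb.stieltjesFunction.measure) :
    Tendsto
      (fun ε : ℝ => ⨆ t : Set.Icc (0 : ℝ) T,
        |(1 / ε) * ∫ s in (0 : ℝ)..(t.1 : ℝ),
            (F (min (s + ε) T) x -
                F (min (s + ε) T) (bplus (stopAt x s) (min (s + ε) T) (x (min (s + ε) T)))) *
              (n (min (s + ε) T) - n s)|)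
      (𝓝[>] 0) (𝓝 0) := by
  obtain ⟨C, hC0, hCx, hCl⟩ := cadlag_bdd hT hx
  set g : ℝ → ℝ := fun t => hb.stieltjesFunction t with hg_def
  have hg : Monotone g := hb.stieltjesFunction.mono
  set M : ℝ := sSup (φ '' Set.Icc (0:ℝ) (2*C+1)) with hM_def
  have hMb : ∀ r ∈ Set.Icc (0:ℝ) (2*C+1), φ r ≤ M := fun r hr =>
    le_csSup (hφb _ (by positivity)) ⟨r, hr, rfl⟩
  have hM0 : 0 ≤ M := (hφ0 0).trans (hMb 0 ⟨le_refl 0, by positivity⟩)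
  -- Key pointwise bound
  have keyA : ∀ s ∈ Set.Icc (0:ℝ) T, ∀ ε > (0:ℝ),
      |F (min (s + ε) T) x -
          F (min (s + ε) T) (bplus (stopAt x s) (min (s + ε) T) (x (min (s + ε) T)))|
        ≤ M * (g (min (s + ε) T) - g s) := by
    intro s hs ε hε
    refine (hbound s hs ε hε).trans ?_
    set c := min (s + ε) T with hc
    have hsc : s ≤ c := le_min (by linarith) hs.2
    have hμIoc : hb.stieltjesFunction.measure (Set.Ioc s c) = ENNReal.ofReal (g c - g s) :=
      StieltjesFunction.measure_Ioc _ s c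
    have hμle : hb.stieltjesFunction.measure (Set.Ioo s c) ≤ ENNReal.ofReal (g c - g s) :=
      hμIoc ▸ measure_mono Set.Ioo_subset_Ioc_self
    have hμlt : hb.stieltjesFunction.measure (Set.Ioo s c) < ⊤ :=
      lt_of_le_of_lt hμle ENNReal.ofReal_lt_top
    have hptw : ∀ u ∈ Set.Ioo s c, ‖φ ‖Function.leftLim x u - x s‖‖ ≤ M := by
      intro u hu
      have hu0 : 0 < u := lt_of_le_of_lt hs.1 hu.1
      have huT : u ≤ T := le_of_lt (lt_of_lt_of_le hu.2 (min_le_right _ _))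
      have h1 : ‖Function.leftLim x u‖ ≤ C := hCl u ⟨hu0, huT⟩
      have h2 : ‖x s‖ ≤ C := hCx s hs
      have harg : ‖Function.leftLim x u - x s‖ ∈ Set.Icc (0:ℝ) (2*C+1) :=
        ⟨norm_nonneg _, (norm_sub_le _ _).trans (by linarith)⟩
      rw [Real.norm_eq_abs, abs_of_nonneg (hφ0 _)]
      exact hMb _ harg
    have htr : (hb.stieltjesFunction.measure (Set.Ioo s c)).toReal ≤ g c - g s := by
      have h1 : (hb.stieltjesFunction.measure (Set.Ioo s c)).toReal
          ≤ (ENNReal.ofReal (g c - g s)).toReal :=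
        ENNReal.toReal_mono ENNReal.ofReal_ne_top hμle
      rwa [ENNReal.toReal_ofReal (sub_nonneg.2 (hg hsc))] at h1
    by_cases hint : Integrable (fun u => φ ‖Function.leftLim x u - x s‖)
        (hb.stieltjesFunction.measure.restrict (Set.Ioo s c))
    · have hn1 := norm_setIntegral_le_of_norm_le_const hμlt hptw
      calc (∫ u in Set.Ioo s c, φ ‖Function.leftLim x u - x s‖ ∂hb.stieltjesFunction.measure)
          ≤ ‖∫ u in Set.Ioo s c, φ ‖Function.leftLim x u - x s‖ ∂hb.stieltjesFunction.measure‖ :=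
            le_abs_self _
        _ ≤ M * (hb.stieltjesFunction.measure (Set.Ioo s c)).toReal := hn1
        _ ≤ M * (g c - g s) := mul_le_mul_of_nonneg_left htr hM0
    · rw [MeasureTheory.integral_undef hint]
      exact mul_nonneg hM0 (sub_nonneg.2 (hg hsc))
  -- Uniform continuity of n
  have hunif : UniformContinuousOn n (Set.Icc (0:ℝ) T) :=
    isCompact_Icc.uniformContinuousOn_of_continuous hn
  rw [Metric.uniformContinuousOn_iff] at hunif
  rw [Metric.tendsto_nhdsWithin_nhds]
  intro η' hη'
  set Q : ℝ := M * (g T - g 0) with hQ_def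
  have hQ0 : 0 ≤ Q := mul_nonneg hM0 (sub_nonneg.2 (hg hT.le))
  set η : ℝ := η' / (Q + 1) with hη_def
  have hη : 0 < η := by positivity
  have hQη : Q * η < η' := by
    rw [hη_def, mul_div_assoc']
    rw [div_lt_iff₀ (by positivity : (0:ℝ) < Q + 1)]
    nlinarith
  obtain ⟨δ, hδ0, hδ⟩ := hunif η hη
  refine ⟨δ, hδ0, ?_⟩
  intro ε hεmem hεd
  have hε0 : (0:ℝ) < ε := hεmem
  have hεδ : ε < δ := by
    rw [Real.dist_eq, sub_zero, abs_of_pos hε0] at hεd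
    exact hεd
  -- integrability of the dominating function
  have hGmono : Monotone (fun s => g (min (s + ε) T)) :=
    hg.comp ((monotone_id.add_const ε).min monotone_const)
  have hGint : ∀ a b' : ℝ, IntervalIntegrable (fun s => g (min (s + ε) T) - g s)
      MeasureTheory.volume a b' := fun a b' =>
    ((hGmono.monotoneOn _).intervalIntegrable).sub ((hg.monotoneOn _).intervalIntegrable)
  have hGnn : ∀ s ∈ Set.Icc (0:ℝ) T, 0 ≤ g (min (s + ε) T) - g s := fun s hs =>
    sub_nonneg.2 (hg (le_min (by linarith) hs.2))
  -- per-term bound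
  have hterm : ∀ t : Set.Icc (0:ℝ) T,
      |(1 / ε) * ∫ s in (0 : ℝ)..(t.1 : ℝ),
          (F (min (s + ε) T) x -
              F (min (s + ε) T) (bplus (stopAt x s) (min (s + ε) T) (x (min (s + ε) T)))) *
            (n (min (s + ε) T) - n s)| ≤ Q * η := by
    rintro ⟨t, ht0, htT⟩
    simp only []
    set f : ℝ → ℝ := fun s =>
      (F (min (s + ε) T) x -
          F (min (s + ε) T) (bplus (stopAt x s) (min (s + ε) T) (x (min (s + ε) T)))) *
        (n (min (s + ε) T) - n s) with hf_def
    by_cases hfint : IntervalIntegrable f MeasureTheory.volume 0 t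
    · set B : ℝ → ℝ := fun s => (M * η) * (g (min (s + ε) T) - g s) with hB_def
      have hBint : ∀ a b' : ℝ, IntervalIntegrable B MeasureTheory.volume a b' :=
        fun a b' => (hGint a b').const_mul _
      have hptw : ∀ᵐ s ∂(MeasureTheory.volume.restrict (Set.uIoc (0:ℝ) t)), ‖f s‖ ≤ B s := by
        rw [MeasureTheory.ae_restrict_iff' measurableSet_uIoc]
        apply Filter.Eventually.of_forall
        intro s hs
        rw [Set.uIoc_of_le ht0] at hs
        have hsIcc : s ∈ Set.Icc (0:ℝ) T := ⟨hs.1.le, hs.2.trans htT⟩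
        have h1 := keyA s hsIcc ε hε0
        have hsε : min (s + ε) T ∈ Set.Icc (0:ℝ) T :=
          ⟨le_min (by linarith [hsIcc.1]) hT.le, min_le_right _ _⟩
        have hdist : dist (min (s + ε) T) s < δ := by
          rw [Real.dist_eq, abs_of_nonneg (sub_nonneg.2 (le_min (by linarith) hsIcc.2))]
          have : min (s + ε) T ≤ s + ε := min_le_left _ _
          linarith
        have h2 : |n (min (s + ε) T) - n s| ≤ η := by
          have := hδ _ hsε _ hsIcc hdist
          rw [Real.dist_eq] at this
          exact this.le
        rw [hf_def, Real.norm_eq_abs, abs_mul]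
        calc |F (min (s + ε) T) x -
              F (min (s + ε) T) (bplus (stopAt x s) (min (s + ε) T) (x (min (s + ε) T)))| *
            |n (min (s + ε) T) - n s|
            ≤ (M * (g (min (s + ε) T) - g s)) * η := by
              apply mul_le_mul h1 h2 (abs_nonneg _)
              exact mul_nonneg hM0 (hGnn s hsIcc)
          _ = B s := by rw [hB_def]; ring
      have hnle : ‖∫ s in (0:ℝ)..t, f s‖ ≤ |∫ s in (0:ℝ)..t, B s| :=
        intervalIntegral.norm_integral_le_abs_of_norm_le hptw (hBint 0 t)
      have hBt : (∫ s in (0:ℝ)..t, B s) ≤ (M * η) * (ε * (g T - g 0)) := by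
        have e1 : (∫ s in (0:ℝ)..t, B s)
            = (M * η) * ∫ s in (0:ℝ)..t, (g (min (s + ε) T) - g s) := by
          rw [hB_def, intervalIntegral.integral_const_mul]
        have e2 : (∫ s in (0:ℝ)..t, (g (min (s + ε) T) - g s))
            ≤ ∫ s in (0:ℝ)..T, (g (min (s + ε) T) - g s) := by
          have hadd : (∫ s in (0:ℝ)..t, (g (min (s + ε) T) - g s))
              + ∫ s in t..T, (g (min (s + ε) T) - g s)
              = ∫ s in (0:ℝ)..T, (g (min (s + ε) T) - g s) :=
            intervalIntegral.integral_add_adjacent_intervals (hGint 0 t) (hGint t T)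
          have hpos : 0 ≤ ∫ s in t..T, (g (min (s + ε) T) - g s) :=
            intervalIntegral.integral_nonneg htT fun s hs =>
              hGnn s ⟨ht0.trans hs.1, hs.2⟩
          linarith
        have e3 := monotone_shift_integral_le hg hT hε0
        calc (∫ s in (0:ℝ)..t, B s)
            = (M * η) * ∫ s in (0:ℝ)..t, (g (min (s + ε) T) - g s) := e1
          _ ≤ (M * η) * (ε * (g T - g 0)) := by
              apply mul_le_mul_of_nonneg_left _ (mul_nonneg hM0 hη.le)
              exact e2.trans e3
      have hBnn : 0 ≤ ∫ s in (0:ℝ)..t, B s :=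
        intervalIntegral.integral_nonneg ht0 fun s hs =>
          mul_nonneg (mul_nonneg hM0 hη.le) (hGnn s ⟨hs.1, hs.2.trans htT⟩)
      have habs : |∫ s in (0:ℝ)..t, f s| ≤ (M * η) * (ε * (g T - g 0)) := by
        rw [← Real.norm_eq_abs]
        refine hnle.trans ?_
        rw [abs_of_nonneg hBnn]
        exact hBt
      rw [abs_mul, abs_of_pos (by positivity : (0:ℝ) < 1 / ε)]
      calc (1 / ε) * |∫ s in (0:ℝ)..t, f s|
          ≤ (1 / ε) * ((M * η) * (ε * (g T - g 0))) := by
            apply mul_le_mul_of_nonneg_left habs (by positivity)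
        _ = Q * η := by field_simp [hQ_def]; ring
    · rw [intervalIntegral.integral_undef hfint, mul_zero, abs_zero]
      exact mul_nonneg hQ0 hη.le
  haveI : Nonempty (Set.Icc (0:ℝ) T) := ⟨⟨0, le_refl 0, hT.le⟩⟩
  have hbdd : BddAbove (Set.range fun t : Set.Icc (0:ℝ) T =>
      |(1 / ε) * ∫ s in (0 : ℝ)..(t.1 : ℝ),
          (F (min (s + ε) T) x -
              F (min (s + ε) T) (bplus (stopAt x s) (min (s + ε) T) (x (min (s + ε) T)))) *
            (n (min (s + ε) T) - n s)|) := by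
    refine ⟨Q * η, ?_⟩
    rintro y ⟨t, rfl⟩
    exact hterm t
  have hsup_le : (⨆ t : Set.Icc (0:ℝ) T,
      |(1 / ε) * ∫ s in (0 : ℝ)..(t.1 : ℝ),
          (F (min (s + ε) T) x -
              F (min (s + ε) T) (bplus (stopAt x s) (min (s + ε) T) (x (min (s + ε) T)))) *
            (n (min (s + ε) T) - n s)|) ≤ Q * η := ciSup_le hterm
  have hsup_nn : 0 ≤ (⨆ t : Set.Icc (0:ℝ) T,
      |(1 / ε) * ∫ s in (0 : ℝ)..(t.1 : ℝ),
          (F (min (s + ε) T) x -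
              F (min (s + ε) T) (bplus (stopAt x s) (min (s + ε) T) (x (min (s + ε) T)))) *
            (n (min (s + ε) T) - n s)|) :=
    le_trans (abs_nonneg _) (le_ciSup hbdd ⟨0, le_refl 0, hT.le⟩)
  rw [Real.dist_eq, sub_zero, abs_of_nonneg hsup_nn]
  exact lt_of_le_of_lt hsup_le hQη
end
end

section
/- Let x : [0,T] → ℝ^d be càdlàg with Σ_{s∈(0,T]} |Δx(s)|² < ∞ and let n : [0,T] → ℝ be continuous; extend both by x(u) := x(T) and n(u) := n(T) for u > T. Let G : Θ → ℝ^d be non-anticipative, locally uniformly continuous and locally bounded. For ε > 0 and t ∈ [0,T] set I_ε(t) := (1/ε) ∫₀^t [ ∫₀¹ ( G((s+ε)∧T, x_{s∧} ⊕_{(s+ε)∧T} λ(x(s+ε) − x(s))) − G((s+ε)∧T, x_{s∧}) ) dλ ] · (x(s+ε) − x(s)) · (n(s+ε) − n(s)) ds. Let (ε_k)_{k∈ℕ} be a sequence decreasing to 0 such that limsup_k (1/ε_k) ∫₀^T |x((s+ε_k)∧T) − x(s)|² ds < ∞ and limsup_k (1/ε_k) ∫₀^T |n((s+ε_k)∧T)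 − n(s)|² ds < ∞. Then sup_{t∈[0,T]} |I_{ε_k}(t)| → 0 as k → ∞. (This is the pathwise statement underlying the convergence of the term I^{ε,11} in the proof of the C^{0,1} Itô–Dupire formula, applied with G = ∇_x F.) -/
noncomputable section
open Filter Topology

/-- The predictable stopped path `x⁻_{t∧}`. -/
def pstopAt {E : Type*} [TopologicalSpace E] (x : ℝ → E) (t : ℝ) : ℝ → E :=
  fun s => if s < t then x s else Function.leftLim x t

/-- The vertically bumped path `x ⊕_t y`. -/
def vplus {E : Type*} [Add E] (x : ℝ → E) (t : ℝ) (y : E) : ℝ → E :=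
  fun s => if s < t then x s else x t + y

/-- The jump `Δx(t) = x(t) - x(t-)`. -/
def jumpAt {E : Type*} [TopologicalSpace E] [Sub E] (x : ℝ → E) (t : ℝ) : E :=
  x t - Function.leftLim x t

/-- The pseudo-distance `d_Θ` on `Θ = [0,T] × D([0,T])`:
`d_Θ((t,x),(t',x')) = |t - t'| + sup_{s ∈ [0,T]} ‖x_{t∧}(s) - x'_{t'∧}(s)‖`. -/
def dTheta {E : Type*} [SeminormedAddGroup E] (T : ℝ) (p q : ℝ × (ℝ → E)) : ℝ :=
  |p.1 - q.1| + ⨆ s : Set.Icc (0 : ℝ) T, ‖stopAt p.2 p.1 s.1 - stopAt q.2 q.1 s.1‖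

/-- `F` is vertically differentiable at `(t,x)` with vertical gradient `G`:
the map `y ↦ F(t, x ⊕_t y)` has gradient `G` at `0`. -/
def HasVerticalGradientAt {d : ℕ} (F : ℝ → (ℝ → EuclideanSpace ℝ (Fin d)) → ℝ)
    (G : EuclideanSpace ℝ (Fin d)) (t : ℝ) (x : ℝ → EuclideanSpace ℝ (Fin d)) : Prop :=
  HasGradientAt (fun y => F t (vplus x t y)) G 0

/-- `F ∈ C^{0,1}(Θ)` with vertical gradient functional `G = ∇_x F`: `F` and `G` are
non-anticipative, `G t x` is the vertical gradient of `F` at every `(t,x) ∈ Θ`, and `G` is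
continuous on `Θ` with respect to `d_Θ`. -/
def IsC01 {d : ℕ} (T : ℝ) (F : ℝ → (ℝ → EuclideanSpace ℝ (Fin d)) → ℝ)
    (G : ℝ → (ℝ → EuclideanSpace ℝ (Fin d)) → EuclideanSpace ℝ (Fin d)) : Prop :=
  NonAnticipative T F ∧ NonAnticipative T G ∧
  (∀ t ∈ Set.Icc (0 : ℝ) T, ∀ x, IsCadlagOn T x → HasVerticalGradientAt F (G t x) t x) ∧
  (∀ t ∈ Set.Icc (0 : ℝ) T, ∀ x, IsCadlagOn T x → ∀ ε > (0 : ℝ), ∃ δ > (0 : ℝ),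
    ∀ t' ∈ Set.Icc (0 : ℝ) T, ∀ x', IsCadlagOn T x' →
      dTheta T (t, x) (t', x') < δ → ‖G t x - G t' x'‖ < ε)

/-- `δ` is a family of moduli of continuity witnessing the local uniform continuity of `G`:
for each `K`, `δ K` is non-negative and non-decreasing on `ℝ₊`, continuous at `0` and vanishing
at `0`, and `‖G(t,x) - G(t',x')‖ ≤ δ K (d_Θ((t,x),(t',x')))` whenever `‖x‖ ∨ ‖x'‖ ≤ K`. -/
def IsModulusFamily {d : ℕ} (T : ℝ)
    (G : ℝ → (ℝ → EuclideanSpace ℝ (Fin d)) → EuclideanSpace ℝ (Fin d))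
    (δ : ℝ → ℝ → ℝ) : Prop :=
  (∀ K r, 0 ≤ r → 0 ≤ δ K r) ∧ (∀ K, MonotoneOn (δ K) (Set.Ici 0)) ∧
  (∀ K, ContinuousWithinAt (δ K) (Set.Ici 0) 0) ∧ (∀ K, δ K 0 = 0) ∧
  ∀ K > (0 : ℝ), ∀ t ∈ Set.Icc (0 : ℝ) T, ∀ t' ∈ Set.Icc (0 : ℝ) T, ∀ x x',
    IsCadlagOn T x → IsCadlagOn T x' →
    (∀ s ∈ Set.Icc (0 : ℝ) T, ‖x s‖ ≤ K) → (∀ s ∈ Set.Icc (0 : ℝ) T, ‖x' s‖ ≤ K) →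
    ‖G t x - G t' x'‖ ≤ δ K (dTheta T (t, x) (t', x'))

set_option maxHeartbeats 2000000

lemma IsCadlagOn.exists_bound {E : Type*} [NormedAddCommGroup E] {T : ℝ} {x : ℝ → E}
    (hT : 0 ≤ T) (hx : IsCadlagOn T x) :
    ∃ K : ℝ, 0 < K ∧ ∀ s ∈ Set.Icc (0:ℝ) T, ‖x s‖ ≤ K := by
  have key : ∀ t ∈ Set.Icc (0:ℝ) T, ∃ U : Set ℝ, U ∈ 𝓝 t ∧ ∃ M : ℝ,
      ∀ s ∈ U ∩ Set.Icc 0 T, ‖x s‖ ≤ M := by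
    intro t ht
    have hright : ∃ Mr : ℝ, ∀ᶠ s in 𝓝 t, s ∈ Set.Icc 0 T ∩ Set.Ici t → ‖x s‖ ≤ Mr := by
      rcases eq_or_lt_of_le ht.2 with hEq | hlt
      · refine ⟨‖x t‖, Eventually.of_forall fun s hs => le_of_eq ?_⟩
        have : s = t := le_antisymm (hEq ▸ hs.1.2) hs.2
        rw [this]
      · have hc : Tendsto (fun s => ‖x s‖) (𝓝[Set.Ici t] t) (𝓝 ‖x t‖) :=
          (hx.1 t ⟨ht.1, hlt⟩).norm
        have h1 : ∀ᶠ s in 𝓝[Set.Ici t] t, ‖x s‖ < ‖x t‖ + 1 :=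
          hc.eventually_lt_const (lt_add_one _)
        rw [eventually_nhdsWithin_iff] at h1
        exact ⟨‖x t‖ + 1, h1.mono fun s hs h2 => (hs h2.2).le⟩
    have hleft : ∃ Ml : ℝ, ∀ᶠ s in 𝓝 t, s ∈ Set.Icc 0 T ∩ Set.Iio t → ‖x s‖ ≤ Ml := by
      rcases eq_or_lt_of_le ht.1 with hEq | hlt
      · exact ⟨0, Eventually.of_forall fun s hs =>
          absurd (lt_of_lt_of_le hs.2 hEq.ge) (not_lt.mpr hs.1.1)⟩
      · obtain ⟨L, hL⟩ := hx.2 t ⟨hlt, ht.2⟩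
        have h1 : ∀ᶠ s in 𝓝[<] t, ‖x s‖ < ‖L‖ + 1 :=
          hL.norm.eventually_lt_const (lt_add_one _)
        rw [eventually_nhdsWithin_iff] at h1
        exact ⟨‖L‖ + 1, h1.mono fun s hs h2 => (hs h2.2).le⟩
    obtain ⟨Mr, hMr⟩ := hright
    obtain ⟨Ml, hMl⟩ := hleft
    refine ⟨_, (hMr.and hMl), max Mr Ml, fun s hs => ?_⟩
    rcases lt_or_ge s t with h | h
    · exact (hs.1.2 ⟨hs.2, h⟩).trans (le_max_right _ _)
    · exact (hs.1.1 ⟨hs.2, h⟩).trans (le_max_left _ _)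
  choose U hU M hM using key
  obtain ⟨F, hF⟩ := isCompact_Icc.elim_nhds_subcover' U (fun t ht => (hU t ht))
  have h0 : (0:ℝ) ∈ Set.Icc (0:ℝ) T := ⟨le_refl _, hT⟩
  obtain ⟨i, hi⟩ := Set.mem_iUnion.1 (hF h0)
  obtain ⟨hiF, -⟩ := Set.mem_iUnion.1 hi
  have hFne : F.Nonempty := ⟨i, hiF⟩
  refine ⟨max 1 (F.sup' hFne (fun j => M j.1 j.2)), lt_of_lt_of_le one_pos (le_max_left _ _),
    fun s hs => ?_⟩
  obtain ⟨j, hj⟩ := Set.mem_iUnion.1 (hF hs)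
  obtain ⟨hjF, hjs⟩ := Set.mem_iUnion.1 hj
  exact le_trans (hM j.1 j.2 s ⟨hjs, hs⟩)
    (le_trans (Finset.le_sup' (fun j => M j.1 j.2) hjF) (le_max_right _ _))

section Aux
variable {E : Type*} [NormedAddCommGroup E] {T : ℝ} {x : ℝ → E}

/-- generic: a function equal to `z` on `Iio c` and constant on `Ici c` is cadlag if `z` is. -/
lemma cadlag_piece (hx : IsCadlagOn T x) (c : ℝ) (v : E)
    (f : ℝ → E) (hf1 : ∀ u, u < c → f u = x u) (hf2 : ∀ u, c ≤ u → f u = v) :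
    IsCadlagOn T f := by
  constructor
  · intro t ht
    rcases lt_or_ge t c with h | h
    · refine (hx.1 t ht).congr_of_eventuallyEq ?_ (hf1 t h)
      filter_upwards [mem_nhdsWithin_of_mem_nhds (Iio_mem_nhds h)] with u hu
      exact hf1 u hu
    · have : ∀ u ∈ Set.Ici t, f u = v := fun u hu => hf2 u (le_trans h hu)
      exact ContinuousWithinAt.congr continuousWithinAt_const this (this t Set.self_mem_Ici)
  · intro t ht
    rcases le_or_gt t c with h | h
    · obtain ⟨L, hL⟩ := hx.2 t ht
      refine ⟨L, hL.congr' ?_⟩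
      filter_upwards [self_mem_nhdsWithin] with u hu
      exact (hf1 u (lt_of_lt_of_le hu h)).symm
    · refine ⟨v, tendsto_const_nhds.congr' ?_⟩
      have : Set.Ioo c t ∈ 𝓝[<] t := Ioo_mem_nhdsLT_of_mem ⟨h, le_rfl⟩
      filter_upwards [this] with u hu
      exact (hf2 u hu.1.le).symm

lemma stopAt_cadlag (hx : IsCadlagOn T x) (s : ℝ) : IsCadlagOn T (stopAt x s) :=
  cadlag_piece hx s (x s) _ (fun u hu => if_pos hu) (fun u hu => if_neg (not_lt.mpr hu))

lemma vplus_cadlag {z : ℝ → E} (hz : IsCadlagOn T z) (c : ℝ) (y : E) :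
    IsCadlagOn T (vplus z c y) :=
  cadlag_piece hz c (z c + y) _ (fun u hu => if_pos hu) (fun u hu => if_neg (not_lt.mpr hu))

lemma stopAt_norm_le {K : ℝ} (hK : ∀ u ∈ Set.Icc (0:ℝ) T, ‖x u‖ ≤ K) {s : ℝ}
    (hs : s ∈ Set.Icc (0:ℝ) T) : ∀ u ∈ Set.Icc (0:ℝ) T, ‖stopAt x s u‖ ≤ K := by
  intro u hu
  unfold stopAt
  split
  · exact hK u hu
  · exact hK s hs

lemma vplus_norm_le {K : ℝ} {z : ℝ → E} (hK : ∀ u ∈ Set.Icc (0:ℝ) T, ‖z u‖ ≤ K) {c : ℝ}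
    (hc : c ∈ Set.Icc (0:ℝ) T) (y : E) :
    ∀ u ∈ Set.Icc (0:ℝ) T, ‖vplus z c y u‖ ≤ K + ‖y‖ := by
  intro u hu
  unfold vplus
  split
  · exact le_trans (hK u hu) (le_add_of_nonneg_right (norm_nonneg _))
  · exact le_trans (norm_add_le _ _) (add_le_add_left (hK c hc) _)

lemma dTheta_vplus_le (hT : 0 ≤ T) {z : ℝ → E} {c : ℝ} (hc : c ≤ T) (y : E) :
    dTheta T (c, vplus z c y) (c, z) ∈ Set.Icc 0 ‖y‖ := by
  have hne : Nonempty (Set.Icc (0:ℝ) T) := ⟨⟨0, le_rfl, hT⟩⟩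
  have hval : ∀ u : Set.Icc (0:ℝ) T,
      ‖stopAt (vplus z c y) c u.1 - stopAt z c u.1‖ = if u.1 < c then 0 else ‖y‖ := by
    intro u
    unfold stopAt vplus
    rcases lt_or_ge u.1 c with h | h
    · simp [h]
    · simp [not_lt.mpr h, lt_irrefl c]
  constructor
  · refine add_nonneg (abs_nonneg _) ?_
    refine Real.iSup_nonneg fun u => norm_nonneg _
  · rw [dTheta]
    simp only [sub_self, abs_zero, zero_add]
    refine ciSup_le fun u => ?_
    rw [hval u]
    split
    · exact norm_nonneg y
    · exact le_rfl

end Aux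

lemma cadlag_clamp_measurable {E : Type*} [NormedAddCommGroup E]
    [MeasurableSpace E] [BorelSpace E] {T : ℝ} {x : ℝ → E}
    (hT : 0 < T) (hx : IsCadlagOn T x) :
    Measurable (fun s : ℝ => x (min (max s 0) T)) := by
  have hmeas : ∀ n : ℕ,
      Measurable (fun s : ℝ => x (min (max (((⌊s * 2^n⌋ + 1 : ℤ) : ℝ) / 2^n) 0) T)) := by
    intro n
    exact (measurable_of_countable
        (fun k : ℤ => x (min (max (((k + 1 : ℤ) : ℝ) / 2^n) 0) T))).comp
      (Int.measurable_floor.comp (measurable_id.mul_const _))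
  refine measurable_of_tendsto_metrizable hmeas ?_
  rw [tendsto_pi_nhds]
  intro s
  set tn : ℕ → ℝ := fun n => ((⌊s * 2^n⌋ + 1 : ℤ) : ℝ) / 2^n with htn
  have h2pos : ∀ n : ℕ, (0:ℝ) < 2^n := fun n => by positivity
  have htn_gt : ∀ n, s < tn n := by
    intro n
    rw [htn, lt_div_iff₀ (h2pos n)]
    push_cast
    exact Int.lt_floor_add_one _
  have htn_le : ∀ n, tn n ≤ s + (1/2)^n := by
    intro n
    rw [htn, div_le_iff₀ (h2pos n)]
    push_cast
    have := Int.floor_le (s * 2^n)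
    have h2 : ((1:ℝ)/2)^n * 2^n = 1 := by
      rw [← mul_pow]; norm_num
    nlinarith [h2pos n]
  have htn_lim : Tendsto tn atTop (𝓝 s) := by
    have h1 : Tendsto (fun n : ℕ => s + (1/2:ℝ)^n) atTop (𝓝 (s + 0)) :=
      tendsto_const_nhds.add (tendsto_pow_atTop_nhds_zero_of_lt_one (by norm_num) (by norm_num))
    rw [add_zero] at h1
    exact tendsto_of_tendsto_of_tendsto_of_le_of_le tendsto_const_nhds h1
      (fun n => (htn_gt n).le) htn_le
  rcases le_or_gt T s with hs | hs
  · have heq : ∀ n, min (max (tn n) 0) T = T := by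
      intro n
      rw [max_eq_left (le_trans (le_trans hT.le hs) (htn_gt n).le),
        min_eq_right (le_trans hs (htn_gt n).le)]
    have heq2 : min (max s 0) T = T := by
      rw [max_eq_left (le_trans hT.le hs), min_eq_right hs]
    simp only [heq, heq2]
    exact tendsto_const_nhds.congr (fun n => congrArg x (heq n).symm)
  · set c : ℝ := min (max s 0) T with hc
    have hc0 : 0 ≤ c := le_min (le_max_right _ _) hT.le
    have hcT : c < T := by
      rw [hc]
      rcases le_or_gt s 0 with h | h
      · rw [max_eq_right h]; rw [min_eq_left hT.le]; exact hT
      · rw [max_eq_left h.le]; rw [min_eq_left hs.le]; exact hs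
    have hcont := hx.1 c ⟨hc0, hcT⟩
    refine hcont.tendsto.comp ?_
    rw [tendsto_nhdsWithin_iff]
    constructor
    · have : Continuous (fun a : ℝ => min (max a 0) T) :=
        (continuous_id.max continuous_const).min continuous_const
      exact (this.tendsto s).comp htn_lim
    · refine Eventually.of_forall fun n => ?_
      exact min_le_min (max_le_max (htn_gt n).le le_rfl) le_rfl

/-- Convergence of the term `I^{ε,11}` in the proof of the `C^{0,1}` Itô–Dupire formula:
for a càdlàg path `x` with square-summable jumps extended by `x(T)` after `T`, a continuous
`n`, and a non-anticipative, locally uniformly continuous and locally bounded `G`, the quantity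
`I_ε(t) = (1/ε) ∫₀^t [∫₀¹ (G((s+ε)∧T, x_{s∧} ⊕_{(s+ε)∧T} λ(x(s+ε)-x(s))) - G((s+ε)∧T, x_{s∧})) dλ]
  • (x(s+ε)-x(s)) (n(s+ε)-n(s)) ds`
satisfies `sup_{t∈[0,T]} |I_{ε_k}(t)| → 0` along any sequence `ε_k ↓ 0` for which the
approximate quadratic variations of `x` and `n` stay bounded. -/
theorem stmt9 (T : ℝ) (hT : 0 < T) (d : ℕ) (hd : 1 ≤ d)
    (x : ℝ → EuclideanSpace ℝ (Fin d)) (hx : IsCadlagOn T x)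
    (hxT : ∀ u, T ≤ u → x u = x T)
    (hjump : Summable (fun s : Set.Ioc (0 : ℝ) T => ‖jumpAt x s.1‖ ^ 2))
    (n : ℝ → ℝ) (hn : ContinuousOn n (Set.Icc (0 : ℝ) T)) (hnT : ∀ u, T ≤ u → n u = n T)
    (G : ℝ → (ℝ → EuclideanSpace ℝ (Fin d)) → EuclideanSpace ℝ (Fin d))
    (hGna : NonAnticipative T G)
    (δ : ℝ → ℝ → ℝ) (hδ : IsModulusFamily T G δ)
    (hGb : ∀ K > (0 : ℝ), ∃ B : ℝ, ∀ t ∈ Set.Icc (0 : ℝ) T, ∀ z, IsCadlagOn T z →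
      (∀ s ∈ Set.Icc (0 : ℝ) T, ‖z s‖ ≤ K) → ‖G t z‖ ≤ B)
    (ε : ℕ → ℝ) (hεpos : ∀ k, 0 < ε k) (hεanti : StrictAnti ε)
    (hεlim : Tendsto ε atTop (𝓝 0))
    (hX2 : ∃ C : ℝ, ∀ᶠ k in atTop,
      (1 / ε k) * ∫ s in (0 : ℝ)..T, ‖x (min (s + ε k) T) - x s‖ ^ 2 ≤ C)
    (hN2 : ∃ C : ℝ, ∀ᶠ k in atTop,
      (1 / ε k) * ∫ s in (0 : ℝ)..T, |n (min (s + ε k) T) - n s| ^ 2 ≤ C) :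
    Tendsto
      (fun k : ℕ => ⨆ t : Set.Icc (0 : ℝ) T,
        |(1 / ε k) * ∫ s in (0 : ℝ)..(t.1 : ℝ),
            (inner ℝ
              (∫ l in (0 : ℝ)..1,
                (G (min (s + ε k) T)
                    (vplus (stopAt x s) (min (s + ε k) T) (l • (x (s + ε k) - x s))) -
                  G (min (s + ε k) T) (stopAt x s)))
              (x (s + ε k) - x s) : ℝ) *
              (n (s + ε k) - n s)|)
      atTop (𝓝 0) := by
  classical
  obtain ⟨hδ1, hδ2, hδ3, hδ4, hδ5⟩ := hδ
  obtain ⟨K, hK, hKb⟩ := IsCadlagOn.exists_bound hT.le hx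
  set K' : ℝ := 3 * K with hK'def
  have hK' : 0 < K' := by positivity
  obtain ⟨B0, hB0⟩ := hGb K' hK'
  set B : ℝ := |B0| + 1 with hBdef
  have hB : 0 < B := by positivity
  have hGB : ∀ t ∈ Set.Icc (0:ℝ) T, ∀ z, IsCadlagOn T z →
      (∀ s ∈ Set.Icc (0:ℝ) T, ‖z s‖ ≤ K') → ‖G t z‖ ≤ B := by
    intro t ht z hz hzb
    refine le_trans (hB0 t ht z hz hzb) ?_
    have := le_abs_self B0
    rw [hBdef]; linarith
  obtain ⟨CX, hCX⟩ := hX2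
  obtain ⟨CN, hCN⟩ := hN2
  set D : ℝ := max CX CN + 1 with hDdef
  have hD : 0 < D := by
    obtain ⟨k, hk⟩ := hCX.exists
    have h0 : 0 ≤ (1 / ε k) * ∫ s in (0:ℝ)..T, ‖x (min (s + ε k) T) - x s‖ ^ 2 :=
      mul_nonneg (one_div_nonneg.mpr (hεpos k).le) (intervalIntegral.integral_nonneg hT.le
        (fun u _ => by positivity))
    have : (0:ℝ) ≤ CX := le_trans h0 hk
    have := le_max_left CX CN
    rw [hDdef]; linarith
  -- the measurable clamped version of x
  set y : ℝ → EuclideanSpace ℝ (Fin d) := fun s => x (min (max s 0) T) with hydef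
  have hy : Measurable y := cadlag_clamp_measurable hT hx
  have hyx : ∀ s ∈ Set.Icc (0:ℝ) T, y s = x s := by
    intro s hs
    rw [hydef]
    simp only []
    rw [max_eq_left hs.1, min_eq_left hs.2]
  have hyb : ∀ s, ‖y s‖ ≤ K := fun s =>
    hKb _ ⟨le_min (le_max_right _ _) hT.le, min_le_right _ _⟩
  haveI : Nonempty ↥(Set.Icc (0:ℝ) T) := ⟨⟨0, le_rfl, hT.le⟩⟩
  rw [Metric.tendsto_atTop]
  intro ζ hζ
  -- choose η from the modulus
  have hδcont : Tendsto (δ K') (𝓝[Set.Ici 0] 0) (𝓝 0) := by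
    have := hδ3 K'
    rw [ContinuousWithinAt, hδ4 K'] at this
    exact this
  have hev : {r : ℝ | δ K' r < ζ / (4 * D)} ∈ 𝓝[Set.Ici 0] (0:ℝ) :=
    hδcont.eventually_lt_const (by positivity)
  obtain ⟨η, hη, hIcc⟩ := mem_nhdsGE_iff_exists_Icc_subset.1 hev
  have hδη : δ K' η < ζ / (4 * D) := hIcc ⟨hη.le, le_rfl⟩
  have hδηnn : 0 ≤ δ K' η := hδ1 K' η hη.le
  -- choose the uniform-continuity scale for n
  set ζn : ℝ := ζ * η / (8 * B * D) with hζndef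
  have hζn : 0 < ζn := by positivity
  have hunif := (isCompact_Icc.uniformContinuousOn_of_continuous hn)
  rw [Metric.uniformContinuousOn_iff] at hunif
  obtain ⟨θ, hθ, hθn⟩ := hunif ζn hζn
  have hevk : ∀ᶠ k in atTop,
      ((1 / ε k) * ∫ s in (0:ℝ)..T, ‖x (min (s + ε k) T) - x s‖ ^ 2 ≤ CX) ∧
      ((1 / ε k) * ∫ s in (0:ℝ)..T, |n (min (s + ε k) T) - n s| ^ 2 ≤ CN) ∧
      ε k < θ :=
    hCX.and (hCN.and (hεlim.eventually_lt_const hθ))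
  rw [eventually_atTop] at hevk
  obtain ⟨N, hN⟩ := hevk
  refine ⟨N, fun k hk => ?_⟩
  obtain ⟨hkX, hkN, hkθ⟩ := hN k hk
  have he : 0 < ε k := hεpos k
  -- abbreviations for this k
  set r : ℝ → ℝ := fun s => ‖y (min (s + ε k) T) - y s‖ with hrdef
  set ρ : ℝ → ℝ := fun s => |n (min (s + ε k) T) - n s| with hρdef
  set u : ℝ := 2 * B * ζn / η with hudef
  have hu : 0 < u := by positivity
  have huη : u * η = 2 * B * ζn := by rw [hudef]; field_simp
  set c₁ : ℝ := δ K' η / 2 + u with hc₁def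
  set c₂ : ℝ := δ K' η / 2 with hc₂def
  have hc₁ : 0 ≤ c₁ := by positivity
  have hc₂ : 0 ≤ c₂ := by positivity
  set φ : ℝ → ℝ := fun s => c₁ * r s ^ 2 + c₂ * ρ s ^ 2 with hφdef
  have hφ0 : ∀ s, 0 ≤ φ s := fun s => by positivity
  -- integrability
  have hr2_int : IntervalIntegrable (fun s => r s ^ 2) MeasureTheory.volume 0 T := by
    rw [intervalIntegrable_iff]
    refine MeasureTheory.Integrable.mono' (g := fun _ => (2 * K) ^ 2)
      (MeasureTheory.integrableOn_const measure_Ioc_lt_top.ne) ?_ ?_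
    · exact (((hy.comp (((measurable_id.add_const (ε k)).min measurable_const))).sub
        hy).norm.pow_const 2).aestronglyMeasurable
    · refine MeasureTheory.ae_of_all _ fun s => ?_
      have h1 : r s ≤ 2 * K := by
        rw [hrdef]
        refine le_trans (norm_sub_le _ _) ?_
        have := hyb (min (s + ε k) T); have := hyb s; linarith
      have h2 : (0:ℝ) ≤ r s := norm_nonneg _
      rw [Real.norm_eq_abs, abs_of_nonneg (by positivity)]
      show r s ^ 2 ≤ (2 * K) ^ 2
      nlinarith
  have hρ_cont : ContinuousOn ρ (Set.Icc 0 T) := by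
    have h1 : ContinuousOn (fun s => n (min (s + ε k) T)) (Set.Icc (0:ℝ) T) := by
      refine hn.comp (Continuous.continuousOn ?_) ?_
      · exact (continuous_id.add continuous_const).min continuous_const
      · intro s hs
        exact ⟨le_min (by linarith [hs.1, he.le]) hT.le, min_le_right _ _⟩
    exact (h1.sub hn).abs
  have hρ2_int : IntervalIntegrable (fun s => ρ s ^ 2) MeasureTheory.volume 0 T :=
    (hρ_cont.pow 2).intervalIntegrable_of_Icc hT.le
  have hφ_int : IntervalIntegrable φ MeasureTheory.volume 0 T :=
    (hr2_int.const_mul c₁).add (hρ2_int.const_mul c₂)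
  -- ρ is uniformly small
  have hρζ : ∀ s ∈ Set.Icc (0:ℝ) T, ρ s ≤ ζn := by
    intro s hs
    have hmem : min (s + ε k) T ∈ Set.Icc (0:ℝ) T :=
      ⟨le_min (by linarith [hs.1, he.le]) hT.le, min_le_right _ _⟩
    have hdist : dist (min (s + ε k) T) s < θ := by
      rw [Real.dist_eq, abs_of_nonneg (by
        have : s ≤ min (s + ε k) T := le_min (by linarith [he.le]) hs.2
        linarith)]
      have h1 : min (s + ε k) T ≤ s + ε k := min_le_left _ _
      linarith
    have := hθn _ hmem _ hs hdist
    rw [Real.dist_eq] at this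
    exact this.le
  -- pointwise bound on the integrand
  have hpt : ∀ s ∈ Set.Icc (0:ℝ) T,
      |(inner ℝ
          (∫ l in (0 : ℝ)..1,
            (G (min (s + ε k) T)
                (vplus (stopAt x s) (min (s + ε k) T) (l • (x (s + ε k) - x s))) -
              G (min (s + ε k) T) (stopAt x s)))
          (x (s + ε k) - x s) : ℝ) *
          (n (s + ε k) - n s)| ≤ φ s := by
    intro s hs
    set t₀ : ℝ := min (s + ε k) T with ht₀def
    have ht₀ : t₀ ∈ Set.Icc (0:ℝ) T :=
      ⟨le_min (by linarith [hs.1, he.le]) hT.le, min_le_right _ _⟩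
    set Δ : EuclideanSpace ℝ (Fin d) := x (s + ε k) - x s with hΔdef
    have hxr : x (s + ε k) = x t₀ := by
      rcases le_or_gt (s + ε k) T with h | h
      · rw [ht₀def, min_eq_left h]
      · rw [ht₀def, min_eq_right h.le, hxT _ h.le]
    have hnr : n (s + ε k) = n t₀ := by
      rcases le_or_gt (s + ε k) T with h | h
      · rw [ht₀def, min_eq_left h]
      · rw [ht₀def, min_eq_right h.le, hnT _ h.le]
    have hrs : r s = ‖Δ‖ := by
      rw [hrdef, hΔdef]
      simp only []
      rw [hyx _ ht₀, hyx s hs, hxr]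
    have hΔ0 : (0:ℝ) ≤ ‖Δ‖ := norm_nonneg _
    have hΔ2K : ‖Δ‖ ≤ 2 * K := by
      rw [hΔdef, hxr]
      refine le_trans (norm_sub_le _ _) ?_
      have := hKb _ ht₀; have := hKb s hs; linarith
    set q : ℝ → EuclideanSpace ℝ (Fin d) := stopAt x s with hqdef
    have hq_cad : IsCadlagOn T q := stopAt_cadlag hx s
    have hq_bd : ∀ v ∈ Set.Icc (0:ℝ) T, ‖q v‖ ≤ K := stopAt_norm_le hKb hs
    have hq_bd' : ∀ v ∈ Set.Icc (0:ℝ) T, ‖q v‖ ≤ K' := fun v hv =>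
      le_trans (hq_bd v hv) (by rw [hK'def]; linarith)
    set m : ℝ := min (δ K' ‖Δ‖) (2 * B) with hmdef
    have hm0 : 0 ≤ m := le_min (hδ1 K' _ hΔ0) (by positivity)
    have hmG : ∀ l ∈ Set.uIoc (0:ℝ) 1,
        ‖G t₀ (vplus q t₀ (l • Δ)) - G t₀ q‖ ≤ m := by
      intro l hl
      rw [Set.uIoc_of_le (by norm_num : (0:ℝ) ≤ 1)] at hl
      have hl0 : 0 < l := hl.1
      have hl1 : l ≤ 1 := hl.2
      have hlΔ : ‖l • Δ‖ ≤ ‖Δ‖ := by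
        rw [norm_smul, Real.norm_eq_abs, abs_of_pos hl0]
        nlinarith
      have hp_cad : IsCadlagOn T (vplus q t₀ (l • Δ)) := vplus_cadlag hq_cad t₀ (l • Δ)
      have hp_bd : ∀ v ∈ Set.Icc (0:ℝ) T, ‖vplus q t₀ (l • Δ) v‖ ≤ K' := by
        intro v hv
        refine le_trans (vplus_norm_le hq_bd ht₀ (l • Δ) v hv) ?_
        have := le_trans hlΔ hΔ2K
        rw [hK'def]; linarith
      refine le_min ?_ ?_
      · refine le_trans (hδ5 K' hK' t₀ ht₀ t₀ ht₀ _ q hp_cad hq_cad hp_bd hq_bd') ?_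
        have hd' := dTheta_vplus_le (z := q) hT.le ht₀.2 (l • Δ)
        exact hδ2 K' (Set.mem_Ici.mpr hd'.1) (Set.mem_Ici.mpr hΔ0)
          (le_trans hd'.2 hlΔ)
      · refine le_trans (norm_sub_le _ _) ?_
        have h1 := hGB t₀ ht₀ _ hp_cad hp_bd
        have h2 := hGB t₀ ht₀ q hq_cad hq_bd'
        linarith
    have hI : ‖∫ l in (0:ℝ)..1, (G t₀ (vplus q t₀ (l • Δ)) - G t₀ q)‖ ≤ m := by
      have := intervalIntegral.norm_integral_le_of_norm_le_const hmG
      simpa using this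
    have hρ0 : (0:ℝ) ≤ ρ s := abs_nonneg _
    have hF1 : |(inner ℝ (∫ l in (0 : ℝ)..1,
          (G t₀ (vplus q t₀ (l • Δ)) - G t₀ q)) Δ : ℝ) * (n (s + ε k) - n s)|
        ≤ m * ‖Δ‖ * ρ s := by
      rw [abs_mul]
      have e2 : |n (s + ε k) - n s| = ρ s := by rw [hρdef]; simp only []; rw [hnr]
      rw [e2]
      refine mul_le_mul_of_nonneg_right ?_ hρ0
      exact le_trans (abs_real_inner_le_norm _ _)
        (mul_le_mul_of_nonneg_right hI hΔ0)
    have hφs : φ s = c₁ * ‖Δ‖ ^ 2 + c₂ * ρ s ^ 2 := by rw [hφdef]; simp only []; rw [hrs]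
    rw [hφs]
    rcases le_or_gt ‖Δ‖ η with hcase | hcase
    · have hmδ : m ≤ δ K' η := le_trans (min_le_left _ _)
        (hδ2 K' (Set.mem_Ici.mpr hΔ0) (Set.mem_Ici.mpr hη.le) hcase)
      nlinarith [hF1, mul_nonneg (mul_nonneg (sub_nonneg.2 hmδ) hΔ0) hρ0,
        mul_nonneg hδηnn (sq_nonneg (‖Δ‖ - ρ s)), mul_nonneg hu.le (sq_nonneg ‖Δ‖)]
    · have hm2B : m ≤ 2 * B := min_le_right _ _
      have hρle : ρ s ≤ ζn := hρζ s hs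
      nlinarith [hF1, huη,
        mul_nonneg (mul_nonneg (sub_nonneg.2 hm2B) hΔ0) hρ0,
        mul_nonneg (mul_nonneg (sub_nonneg.2 hρle) hB.le) hΔ0,
        mul_nonneg (mul_nonneg hu.le hΔ0) (sub_nonneg.2 hcase.le),
        mul_nonneg hc₂ (sq_nonneg (ρ s)), mul_nonneg hδηnn (sq_nonneg ‖Δ‖)]
  -- uniform bound for the supremum
  have hbound : ∀ t : Set.Icc (0:ℝ) T,
      |(1 / ε k) * ∫ s in (0 : ℝ)..(t.1 : ℝ),
          (inner ℝ
            (∫ l in (0 : ℝ)..1,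
              (G (min (s + ε k) T)
                  (vplus (stopAt x s) (min (s + ε k) T) (l • (x (s + ε k) - x s))) -
                G (min (s + ε k) T) (stopAt x s)))
            (x (s + ε k) - x s) : ℝ) *
            (n (s + ε k) - n s)|
        ≤ (1 / ε k) * ∫ s in (0:ℝ)..T, φ s := by
    intro t
    have ht01 : (0:ℝ) ≤ t.1 := t.2.1
    have htT : t.1 ≤ T := t.2.2
    set F : ℝ → ℝ := fun s =>
      (inner ℝ
        (∫ l in (0 : ℝ)..1,
          (G (min (s + ε k) T)
              (vplus (stopAt x s) (min (s + ε k) T) (l • (x (s + ε k) - x s))) -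
            G (min (s + ε k) T) (stopAt x s)))
        (x (s + ε k) - x s) : ℝ) *
        (n (s + ε k) - n s) with hFdef
    have h1 : |∫ s in (0:ℝ)..(t.1 : ℝ), F s| ≤ ∫ s in (0:ℝ)..(t.1 : ℝ), φ s := by
      by_cases hint : IntervalIntegrable F MeasureTheory.volume 0 t.1
      · refine le_trans (intervalIntegral.abs_integral_le_integral_abs ht01) ?_
        refine intervalIntegral.integral_mono_on ht01 hint.abs (hφ_int.mono_set ?_) ?_
        · rw [Set.uIcc_of_le ht01, Set.uIcc_of_le hT.le]
          exact Set.Icc_subset_Icc le_rfl htT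
        · intro v hv
          exact hpt v ⟨hv.1, le_trans hv.2 htT⟩
      · rw [intervalIntegral.integral_undef hint, abs_zero]
        exact intervalIntegral.integral_nonneg ht01 (fun v _ => hφ0 v)
    have h2 : ∫ s in (0:ℝ)..(t.1 : ℝ), φ s ≤ ∫ s in (0:ℝ)..T, φ s := by
      have ha : IntervalIntegrable φ MeasureTheory.volume 0 t.1 := by
        refine hφ_int.mono_set ?_
        rw [Set.uIcc_of_le ht01, Set.uIcc_of_le hT.le]
        exact Set.Icc_subset_Icc le_rfl htT
      have hb : IntervalIntegrable φ MeasureTheory.volume t.1 T := by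
        refine hφ_int.mono_set ?_
        rw [Set.uIcc_of_le htT, Set.uIcc_of_le hT.le]
        exact Set.Icc_subset_Icc ht01 le_rfl
      have hadd := intervalIntegral.integral_add_adjacent_intervals ha hb
      have hpos : 0 ≤ ∫ s in (t.1 : ℝ)..T, φ s :=
        intervalIntegral.integral_nonneg htT (fun v _ => hφ0 v)
      linarith
    rw [abs_mul, abs_of_pos (by positivity : (0:ℝ) < 1 / ε k)]
    exact mul_le_mul_of_nonneg_left (le_trans h1 h2) (by positivity)
  -- evaluate the bound
  have hXeq : (∫ s in (0:ℝ)..T, r s ^ 2)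
      = ∫ s in (0:ℝ)..T, ‖x (min (s + ε k) T) - x s‖ ^ 2 := by
    refine intervalIntegral.integral_congr ?_
    intro s hs
    rw [Set.uIcc_of_le hT.le] at hs
    have hmem : min (s + ε k) T ∈ Set.Icc (0:ℝ) T :=
      ⟨le_min (by linarith [hs.1, he.le]) hT.le, min_le_right _ _⟩
    simp only [hrdef]
    rw [hyx _ hmem, hyx s hs]
  have hφeq : (1 / ε k) * ∫ s in (0:ℝ)..T, φ s
      = c₁ * ((1 / ε k) * ∫ s in (0:ℝ)..T, ‖x (min (s + ε k) T) - x s‖ ^ 2)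
      + c₂ * ((1 / ε k) * ∫ s in (0:ℝ)..T, |n (min (s + ε k) T) - n s| ^ 2) := by
    have h1 : (∫ s in (0:ℝ)..T, φ s)
        = c₁ * (∫ s in (0:ℝ)..T, r s ^ 2) + c₂ * (∫ s in (0:ℝ)..T, ρ s ^ 2) := by
      rw [hφdef]
      rw [intervalIntegral.integral_add (hr2_int.const_mul c₁) (hρ2_int.const_mul c₂),
        intervalIntegral.integral_const_mul, intervalIntegral.integral_const_mul]
    rw [h1, hXeq]
    ring
  have hfinal : (1 / ε k) * ∫ s in (0:ℝ)..T, φ s < ζ := by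
    rw [hφeq]
    have hX0 : 0 ≤ (1 / ε k) * ∫ s in (0:ℝ)..T, ‖x (min (s + ε k) T) - x s‖ ^ 2 :=
      mul_nonneg (by positivity) (intervalIntegral.integral_nonneg hT.le
        (fun v _ => by positivity))
    have hN0 : 0 ≤ (1 / ε k) * ∫ s in (0:ℝ)..T, |n (min (s + ε k) T) - n s| ^ 2 :=
      mul_nonneg (by positivity) (intervalIntegral.integral_nonneg hT.le
        (fun v _ => by positivity))
    have hXD : (1 / ε k) * ∫ s in (0:ℝ)..T, ‖x (min (s + ε k) T) - x s‖ ^ 2 ≤ D := by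
      rw [hDdef]; have := le_max_left CX CN; linarith
    have hND : (1 / ε k) * ∫ s in (0:ℝ)..T, |n (min (s + ε k) T) - n s| ^ 2 ≤ D := by
      rw [hDdef]; have := le_max_right CX CN; linarith
    have hD' : D ≠ 0 := hD.ne'
    have hη' : η ≠ 0 := hη.ne'
    have hB' : B ≠ 0 := hB.ne'
    have h3 : ζ / (4 * D) * D = ζ / 4 := by field_simp
    have h4 : δ K' η * D < ζ / 4 := by
      have h5 := mul_lt_mul_of_pos_right hδη hD
      rw [h3] at h5
      exact h5
    have h2 : u * D = ζ / 4 := by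
      rw [hudef, hζndef]
      field_simp
      ring
    have hc₁D : c₁ * D < ζ / 4 + ζ / 4 := by
      rw [hc₁def]
      nlinarith [mul_nonneg hδηnn hD.le]
    have hc₂D : c₂ * D < ζ / 4 := by
      rw [hc₂def]
      nlinarith [mul_nonneg hδηnn hD.le]
    calc c₁ * ((1 / ε k) * ∫ s in (0:ℝ)..T, ‖x (min (s + ε k) T) - x s‖ ^ 2)
          + c₂ * ((1 / ε k) * ∫ s in (0:ℝ)..T, |n (min (s + ε k) T) - n s| ^ 2)
        ≤ c₁ * D + c₂ * D := by
          refine add_le_add (mul_le_mul_of_nonneg_left hXD hc₁)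
            (mul_le_mul_of_nonneg_left hND hc₂)
      _ < ζ / 4 + ζ / 4 + ζ / 4 := by linarith
      _ < ζ := by linarith
  rw [Real.dist_eq, sub_zero, abs_of_nonneg (Real.iSup_nonneg (fun t => abs_nonneg _))]
  exact lt_of_le_of_lt (ciSup_le hbound) hfinal
end
end

section
/- Let F ∈ C^{0,1}(Θ) be such that ∇_x F is locally uniformly continuous with moduli of continuity δ_K(∇_x F, ·). Let x : [0,T] → ℝ^d be càdlàg with ‖x‖ ≤ C and Σ_{s∈(0,T]} |Δx(s)|² < ∞. Then for every ε ∈ (0,1]: Σ_{s∈(0,T], 0<|Δx(s)|<ε} | F(s, x_{s∧}) − F(s, x⁻_{s∧}) − Δx(s) · ∇_x F(s, x⁻_{s∧}) |² ≤ δ_{C+1}(∇_x F, ε)² · Σ_{s∈(0,T]} |Δx(s)|². -/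
noncomputable section
open Filter Topology

/-- auxiliary path: interpolate the jump at `s` with factor `r`. -/
def zpath {d : ℕ} (x : ℝ → EuclideanSpace ℝ (Fin d)) (s r : ℝ) : ℝ → EuclideanSpace ℝ (Fin d) :=
  fun u => if u < s then x u else Function.leftLim x s + r • jumpAt x s

lemma cadlag_cutoff {E : Type*} [TopologicalSpace E] {T s : ℝ} {x : ℝ → E}
    (hx : IsCadlagOn T x) (c : E) :
    IsCadlagOn T (fun u => if u < s then x u else c) := by
  constructor
  · intro t ht
    by_cases h : t < s
    · refine (hx.1 t ht).congr_of_eventuallyEq ?_ (by simp [h])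
      filter_upwards [nhdsWithin_le_nhds (Iio_mem_nhds h)] with u hu
      simp [Set.mem_Iio.mp hu]
    · have hev : (fun u => if u < s then x u else c) =ᶠ[𝓝[Set.Ici t] t] (fun _ => c) := by
        filter_upwards [self_mem_nhdsWithin] with u hu
        simp [not_lt.mpr (le_trans (not_lt.mp h) hu)]
      exact continuousWithinAt_const.congr_of_eventuallyEq hev (by simp [h])
  · intro t ht
    by_cases h : t ≤ s
    · obtain ⟨L, hL⟩ := hx.2 t ht
      refine ⟨L, hL.congr' ?_⟩
      filter_upwards [self_mem_nhdsWithin] with u hu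
      have : u < s := lt_of_lt_of_le hu h
      simp [this]
    · refine ⟨c, tendsto_const_nhds.congr' ?_⟩
      filter_upwards [Ioo_mem_nhdsLT_of_mem ⟨not_le.mp h, le_refl t⟩] with u hu
      simp [not_lt.mpr hu.1.le]

lemma zpath_cadlag {d : ℕ} {T s : ℝ} {x : ℝ → EuclideanSpace ℝ (Fin d)}
    (hx : IsCadlagOn T x) (r : ℝ) : IsCadlagOn T (zpath x s r) :=
  cadlag_cutoff hx _

lemma zpath_zero {d : ℕ} (x : ℝ → EuclideanSpace ℝ (Fin d)) (s : ℝ) :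
    zpath x s 0 = pstopAt x s := by
  funext u; by_cases h : u < s <;> simp [zpath, pstopAt, h]

lemma zpath_one {d : ℕ} (x : ℝ → EuclideanSpace ℝ (Fin d)) (s : ℝ) :
    zpath x s 1 = stopAt x s := by
  funext u; by_cases h : u < s <;> simp [zpath, stopAt, jumpAt, h]

/-- The key pointwise estimate. -/
lemma pointwise_est {d : ℕ} {T : ℝ} (hT : 0 < T)
    {F : ℝ → (ℝ → EuclideanSpace ℝ (Fin d)) → ℝ}
    {G : ℝ → (ℝ → EuclideanSpace ℝ (Fin d)) → EuclideanSpace ℝ (Fin d)}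
    (hFG : IsC01 T F G) {δ : ℝ → ℝ → ℝ} (hδ : IsModulusFamily T G δ)
    {x : ℝ → EuclideanSpace ℝ (Fin d)} (hx : IsCadlagOn T x)
    {C : ℝ} (hxC : ∀ s ∈ Set.Icc (0 : ℝ) T, ‖x s‖ ≤ C)
    {ε : ℝ} (hε : ε ∈ Set.Ioc (0 : ℝ) 1)
    {s : ℝ} (hs : s ∈ Set.Ioc (0 : ℝ) T) (hsε : ‖jumpAt x s‖ < ε) :
    |F s (stopAt x s) - F s (pstopAt x s) -
        (inner ℝ (jumpAt x s) (G s (pstopAt x s)) : ℝ)| ≤ δ (C + 1) ε * ‖jumpAt x s‖ := by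
  have hsIcc : s ∈ Set.Icc (0 : ℝ) T := ⟨hs.1.le, hs.2⟩
  have hC0 : (0 : ℝ) ≤ C := le_trans (norm_nonneg _) (hxC 0 ⟨le_refl _, hT.le⟩)
  -- bound on the left limit
  have hLC : ‖Function.leftLim x s‖ ≤ C := by
    obtain ⟨L', hL'⟩ := hx.2 s hs
    have hLL : Function.leftLim x s = L' := leftLim_eq_of_tendsto hL'
    rw [hLL]
    refine le_of_tendsto hL'.norm ?_
    filter_upwards [Ioo_mem_nhdsLT_of_mem ⟨hs.1, le_refl s⟩] with u hu
    exact hxC u ⟨hu.1.le, hu.2.le.trans hs.2⟩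
  -- bound on zpath
  have hbd : ∀ r ∈ Set.Icc (0 : ℝ) 1, ∀ u ∈ Set.Icc (0 : ℝ) T, ‖zpath x s r u‖ ≤ C + 1 := by
    intro r hr u hu
    by_cases h : u < s
    · simp only [zpath, if_pos h]
      linarith [hxC u hu]
    · simp only [zpath, if_neg h]
      have h1 : ‖Function.leftLim x s + r • jumpAt x s‖
          ≤ ‖Function.leftLim x s‖ + ‖r‖ * ‖jumpAt x s‖ :=
        (norm_add_le _ _).trans (by rw [norm_smul])
      have h2 : ‖r‖ ≤ 1 := by rw [Real.norm_eq_abs]; exact abs_le.mpr ⟨by linarith [hr.1], hr.2⟩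
      have h3 : ‖r‖ * ‖jumpAt x s‖ ≤ 1 * ε :=
        mul_le_mul h2 hsε.le (norm_nonneg _) zero_le_one
      have := hε.2
      linarith
  -- the derivative of r ↦ F s (zpath x s r)
  have hψ : ∀ r : ℝ, HasDerivAt (fun r' => F s (zpath x s r'))
      ((inner ℝ (jumpAt x s) (G s (zpath x s r)) : ℝ)) r := by
    intro r
    have hgrad : HasGradientAt (fun y => F s (vplus (zpath x s r) s y))
        (G s (zpath x s r)) 0 := hFG.2.2.1 s hsIcc (zpath x s r) (zpath_cadlag hx r)
    have hFd := hasGradientAt_iff_hasFDerivAt.mp hgrad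
    have hm : HasDerivAt (fun r' : ℝ => (r' - r) • jumpAt x s) ((1 : ℝ) • jumpAt x s) r :=
      ((hasDerivAt_id r).sub_const r).smul_const (jumpAt x s)
    have hm0 : ((r : ℝ) - r) • jumpAt x s = 0 := by simp
    have hFd' : HasFDerivAt (fun y => F s (vplus (zpath x s r) s y))
        (InnerProductSpace.toDual ℝ (EuclideanSpace ℝ (Fin d)) (G s (zpath x s r)))
        ((r - r) • jumpAt x s) := by
      rw [hm0]; exact hFd
    have key := hFd'.comp_hasDerivAt r hm
    simp only [Function.comp_def] at key
    have heq : (fun r' : ℝ => F s (vplus (zpath x s r) s ((r' - r) • jumpAt x s)))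
        = fun r' => F s (zpath x s r') := by
      funext r'
      congr 1
      funext u
      by_cases h : u < s
      · simp [vplus, zpath, h]
      · simp only [vplus, zpath, if_neg h, if_neg (lt_irrefl s)]
        rw [sub_smul]
        abel
    have hval : (InnerProductSpace.toDual ℝ (EuclideanSpace ℝ (Fin d)) (G s (zpath x s r)))
        ((1 : ℝ) • jumpAt x s) = (inner ℝ (jumpAt x s) (G s (zpath x s r)) : ℝ) := by
      rw [one_smul, InnerProductSpace.toDual_apply_apply]; exact real_inner_comm _ _
    rw [heq, hval] at key
    exact key
  -- modulus bound
  have hGdiff : ∀ r ∈ Set.Icc (0 : ℝ) 1,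
      ‖G s (zpath x s r) - G s (zpath x s 0)‖ ≤ δ (C + 1) ε := by
    intro r hr
    have happ := hδ.2.2.2.2 (C + 1) (by linarith) s hsIcc s hsIcc (zpath x s r) (zpath x s 0)
      (zpath_cadlag hx r) (zpath_cadlag hx 0) (hbd r hr)
      (hbd 0 ⟨le_refl _, zero_le_one⟩)
    have hd0 : (0 : ℝ) ≤ dTheta T (s, zpath x s r) (s, zpath x s 0) :=
      add_nonneg (abs_nonneg _) (Real.iSup_nonneg fun i => norm_nonneg _)
    have hdle : dTheta T (s, zpath x s r) (s, zpath x s 0) ≤ ε := by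
      have h1 : dTheta T (s, zpath x s r) (s, zpath x s 0)
          = ⨆ u : Set.Icc (0 : ℝ) T, ‖stopAt (zpath x s r) s u.1 - stopAt (zpath x s 0) s u.1‖ := by
        simp [dTheta]
      rw [h1]
      refine Real.iSup_le ?_ hε.1.le
      rintro ⟨u, hu⟩
      by_cases h : u < s
      · simp [stopAt, zpath, h, hε.1.le]
      · simp only [stopAt, if_neg h, if_neg (lt_irrefl s), zpath]
        have heq2 : Function.leftLim x s + r • jumpAt x s
            - (Function.leftLim x s + (0 : ℝ) • jumpAt x s) = r • jumpAt x s := by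
          rw [zero_smul]; abel
        rw [heq2, norm_smul, Real.norm_eq_abs]
        have h2 : |r| ≤ 1 := abs_le.mpr ⟨by linarith [hr.1], hr.2⟩
        calc |r| * ‖jumpAt x s‖ ≤ 1 * ε := mul_le_mul h2 hsε.le (norm_nonneg _) zero_le_one
          _ = ε := one_mul ε
    exact happ.trans (hδ.2.1 (C + 1) (Set.mem_Ici.mpr hd0) (Set.mem_Ici.mpr hε.1.le) hdle)
  -- mean value inequality
  set c : ℝ := (inner ℝ (jumpAt x s) (G s (zpath x s 0)) : ℝ) with hc
  have hder : ∀ r ∈ Set.Icc (0 : ℝ) 1,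
      HasDerivWithinAt (fun r' => F s (zpath x s r') - r' * c)
        ((inner ℝ (jumpAt x s) (G s (zpath x s r)) : ℝ) - c) (Set.Icc 0 1) r :=
    fun r _ => (((hψ r).sub (hasDerivAt_mul_const c))).hasDerivWithinAt
  have hM : ∀ r ∈ Set.Icc (0 : ℝ) 1,
      ‖(inner ℝ (jumpAt x s) (G s (zpath x s r)) : ℝ) - c‖ ≤ δ (C + 1) ε * ‖jumpAt x s‖ := by
    intro r hr
    rw [hc, ← inner_sub_right]
    calc ‖(inner ℝ (jumpAt x s) (G s (zpath x s r) - G s (zpath x s 0)) : ℝ)‖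
        ≤ ‖jumpAt x s‖ * ‖G s (zpath x s r) - G s (zpath x s 0)‖ := norm_inner_le_norm _ _
      _ ≤ ‖jumpAt x s‖ * δ (C + 1) ε := mul_le_mul_of_nonneg_left (hGdiff r hr) (norm_nonneg _)
      _ = δ (C + 1) ε * ‖jumpAt x s‖ := mul_comm _ _
  have hmvt := Convex.norm_image_sub_le_of_norm_hasDerivWithin_le hder hM
    (convex_Icc 0 1) (Set.left_mem_Icc.mpr zero_le_one) (Set.right_mem_Icc.mpr zero_le_one)
  rw [← zpath_zero x s, ← zpath_one x s]
  have harr : F s (zpath x s 1) - F s (zpath x s 0)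
      - (inner ℝ (jumpAt x s) (G s (zpath x s 0)) : ℝ)
      = (F s (zpath x s 1) - 1 * c) - (F s (zpath x s 0) - 0 * c) := by
    rw [hc]; ring
  rw [harr]
  simpa [Real.norm_eq_abs] using hmvt


/-- Small-jump estimate: for `F ∈ C^{0,1}(Θ)` with `∇_x F` locally uniformly continuous with
moduli `δ_K`, a càdlàg path `x` bounded by `C` with square-summable jumps, and `ε ∈ (0,1]`,
`Σ_{0<|Δx(s)|<ε} |F(s,x_{s∧}) - F(s,x⁻_{s∧}) - Δx(s)•∇_x F(s,x⁻_{s∧})|²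
   ≤ δ_{C+1}(∇_x F, ε)² Σ_{s∈(0,T]} |Δx(s)|²`. -/
theorem stmt10 (T : ℝ) (hT : 0 < T) (d : ℕ) (hd : 1 ≤ d)
    (F : ℝ → (ℝ → EuclideanSpace ℝ (Fin d)) → ℝ)
    (G : ℝ → (ℝ → EuclideanSpace ℝ (Fin d)) → EuclideanSpace ℝ (Fin d))
    (hFG : IsC01 T F G) (δ : ℝ → ℝ → ℝ) (hδ : IsModulusFamily T G δ)
    (x : ℝ → EuclideanSpace ℝ (Fin d)) (hx : IsCadlagOn T x)
    (C : ℝ) (hxC : ∀ s ∈ Set.Icc (0 : ℝ) T, ‖x s‖ ≤ C)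
    (hjump : Summable (fun s : Set.Ioc (0 : ℝ) T => ‖jumpAt x s.1‖ ^ 2))
    (ε : ℝ) (hε : ε ∈ Set.Ioc (0 : ℝ) 1) :
    ∑' s : {s : ℝ // s ∈ Set.Ioc (0 : ℝ) T ∧ jumpAt x s ≠ 0 ∧ ‖jumpAt x s‖ < ε},
        |F s.1 (stopAt x s.1) - F s.1 (pstopAt x s.1) -
            (inner ℝ (jumpAt x s.1) (G s.1 (pstopAt x s.1)) : ℝ)| ^ 2 ≤
      δ (C + 1) ε ^ 2 * ∑' s : Set.Ioc (0 : ℝ) T, ‖jumpAt x s.1‖ ^ 2 := by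
  classical
  set A := {s : ℝ // s ∈ Set.Ioc (0 : ℝ) T ∧ jumpAt x s ≠ 0 ∧ ‖jumpAt x s‖ < ε} with hA
  let ι : A → Set.Ioc (0 : ℝ) T := fun a => ⟨a.1, a.2.1⟩
  have hι : Function.Injective ι := by
    intro a b h
    exact Subtype.ext (show (ι a).val = (ι b).val from congrArg Subtype.val h)
  have hsum2' : Summable ((fun s : Set.Ioc (0 : ℝ) T => ‖jumpAt x s.1‖ ^ 2) ∘ ι) :=
    hjump.comp_injective hι
  have hsum2 : Summable (fun a : A => ‖jumpAt x a.1‖ ^ 2) := hsum2'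
  have hpt : ∀ a : A,
      |F a.1 (stopAt x a.1) - F a.1 (pstopAt x a.1) -
          (inner ℝ (jumpAt x a.1) (G a.1 (pstopAt x a.1)) : ℝ)| ^ 2
        ≤ δ (C + 1) ε ^ 2 * ‖jumpAt x a.1‖ ^ 2 := by
    intro a
    have h := pointwise_est hT hFG hδ hx hxC hε a.2.1 a.2.2.2
    calc |F a.1 (stopAt x a.1) - F a.1 (pstopAt x a.1) -
          (inner ℝ (jumpAt x a.1) (G a.1 (pstopAt x a.1)) : ℝ)| ^ 2
        ≤ (δ (C + 1) ε * ‖jumpAt x a.1‖) ^ 2 := pow_le_pow_left₀ (abs_nonneg _) h 2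
      _ = δ (C + 1) ε ^ 2 * ‖jumpAt x a.1‖ ^ 2 := by ring
  have hsumM : Summable (fun a : A => δ (C + 1) ε ^ 2 * ‖jumpAt x a.1‖ ^ 2) :=
    hsum2.mul_left _
  calc ∑' a : A, |F a.1 (stopAt x a.1) - F a.1 (pstopAt x a.1) -
          (inner ℝ (jumpAt x a.1) (G a.1 (pstopAt x a.1)) : ℝ)| ^ 2
      ≤ ∑' a : A, δ (C + 1) ε ^ 2 * ‖jumpAt x a.1‖ ^ 2 :=
        Summable.tsum_le_tsum hpt (Summable.of_nonneg_of_le (fun a => sq_nonneg _) hpt hsumM) hsumM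
    _ = δ (C + 1) ε ^ 2 * ∑' a : A, ‖jumpAt x a.1‖ ^ 2 := tsum_mul_left
    _ ≤ δ (C + 1) ε ^ 2 * ∑' s : Set.Ioc (0 : ℝ) T, ‖jumpAt x s.1‖ ^ 2 := by
        refine mul_le_mul_of_nonneg_left ?_ (sq_nonneg _)
        exact Summable.tsum_le_tsum_of_inj ι hι (fun c _ => sq_nonneg _) (fun b => le_refl _) hsum2 hjump
end
end
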